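/- arXiv:math/0505552 — 6 statements merged into one kernel-verified Lean document; each statement's English description precedes it below -/
import Mathlib

section
/- The determinant of the (2n-1)×(2n-1) matrix whose columns k = 1,…,n-1 consist of entries λ_k^j - λ_n^j for j = 1,…,n and λ_k^{-j} - λ_n^{-j} for j = 1,…,n-1, and whose columns k = n,…,2n-1 consist of entries j λ_{k-n+1}^j for j = 1,…,n and -j λ_{k-n+1}^{-j} for j = 1,…,n-1, equals ∏_{1 ≤ j < k ≤ n} (λ_k - λ_j)^4 / ∏_{l=1}^n λ_l^{2n-3}. -/
open Finset Filter Matrix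

namespace Stmt2Aux
noncomputable section



def E (n : ℕ) (j : ℕ) : ℤ :=
  if j < n - 1 then (j : ℤ) + 1 else if j < 2 * n - 1 then ((n : ℤ) - 1) - j else n
def ep (n : ℕ) (j : ℕ) : ℕ :=
  if j < n - 1 then j + n else if j < 2 * n - 1 then 2 * n - 2 - j else 2 * n - 1
lemma ep_cast (n : ℕ) (j : ℕ) (hj : j < 2 * n) (hn : 1 ≤ n) :
    (ep n j : ℤ) = E n j + ((n : ℤ) - 1) := by
  unfold ep E; split_ifs <;> omega

variable (n : ℕ) (lam : ℕ → ℂ)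

lemma sum_two {ι : Type*} [Fintype ι] [DecidableEq ι] (f : ι → ℂ) (a b : ι) (hab : a ≠ b)
    (h : ∀ c, c ≠ a → c ≠ b → f c = 0) : ∑ c, f c = f a + f b := by
  rw [← Finset.sum_subset (Finset.subset_univ {a, b})]
  · rw [Finset.sum_pair hab]
  · intro x _ hx
    simp only [Finset.mem_insert, Finset.mem_singleton, not_or] at hx
    exact h x hx.1 hx.2

def Tp : Matrix (Fin (2*n-1+1)) (Fin (2*n-1+1)) ℂ := .of fun j k =>
  if (k:ℕ) < n-1 then lam k ^ E n j - lam (n-1) ^ E n j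
  else if (k:ℕ) < n then lam (n-1) ^ E n j
  else ((E n j : ℤ) : ℂ) * lam ((k:ℕ)-n) ^ E n j

def Tf : Matrix (Fin (2*n-1+1)) (Fin (2*n-1+1)) ℂ := .of fun j k =>
  if (k:ℕ) < n then lam k ^ E n j else ((E n j : ℤ) : ℂ) * lam ((k:ℕ)-n) ^ E n j

def C3 : Matrix (Fin (2*n-1+1)) (Fin (2*n-1+1)) ℂ := .of fun j k =>
  if (j:ℕ) = (k:ℕ) then 1 else if (j:ℕ) = n-1 ∧ (k:ℕ) < n-1 then -1 else 0

def P2 : Matrix (Fin (2*n-1+1)) (Fin (2*n-1+1)) ℂ := .of fun j k =>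
  if (k:ℕ) < n then lam k ^ ep n (j:ℕ)
  else ((ep n (j:ℕ) : ℕ) : ℂ) * lam ((k:ℕ)-n) ^ (ep n (j:ℕ) - 1)

def C2 : Matrix (Fin (2*n-1+1)) (Fin (2*n-1+1)) ℂ := .of fun j k =>
  if (j:ℕ) = (k:ℕ) then
    (if (k:ℕ) < n then lam (k:ℕ) ^ (-((n:ℤ)-1)) else lam ((k:ℕ)-n) ^ (-((n:ℤ)-2)))
  else if (k:ℕ) = (j:ℕ) + n then -((n:ℂ)-1) * lam (j:ℕ) ^ (-((n:ℤ)-1)) else 0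

lemma step2 (hn : 1 ≤ n) : Tp n lam = Tf n lam * C3 n := by
  ext j k
  rw [Matrix.mul_apply]
  by_cases hk : (k:ℕ) < n-1
  · have hne : k ≠ (⟨n-1, by omega⟩ : Fin (2*n-1+1)) := by
      simp only [ne_eq, Fin.ext_iff]; omega
    rw [sum_two _ k ⟨n-1, by omega⟩ hne ?_]
    · simp only [Tp, Tf, C3, Matrix.of_apply]
      simp only [hk, show (k:ℕ) < n by omega, show ¬(n-1 = (k:ℕ)) by omega,
        show n-1 < n by omega, if_true, if_false, eq_self_iff_true, true_and, if_pos rfl]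
      ring
    · intro c hc1 hc2
      simp only [C3, Matrix.of_apply]
      rw [if_neg (fun h => hc1 (Fin.ext h)), if_neg ?_, mul_zero]
      rintro ⟨h1, -⟩
      exact hc2 (Fin.ext h1)
  · rw [Finset.sum_eq_single_of_mem k (Finset.mem_univ k) ?_]
    · simp only [Tp, Tf, C3, Matrix.of_apply]
      by_cases hk2 : (k:ℕ) < n
      · simp [hk, hk2, show (k:ℕ) = n-1 by omega]
      · simp [hk, hk2]
    · intro c _ hc
      simp only [C3, Matrix.of_apply]
      rw [if_neg (fun h => hc (Fin.ext h)), if_neg (fun h => hk h.2), mul_zero]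

lemma detC3 : (C3 n).det = 1 := by
  rw [Matrix.det_of_lowerTriangular _ ?_]
  · apply Finset.prod_eq_one; intro i _
    simp [C3]
  · intro i j hij
    replace hij : i < j := hij
    rw [Fin.lt_def] at hij
    simp only [C3, Matrix.of_apply]
    rw [if_neg (by omega), if_neg (by omega)]

lemma step3 (hn : 1 ≤ n) (h0 : ∀ l < n, lam l ≠ 0) : Tf n lam = P2 n lam * C2 n lam := by
  ext j k
  have hj2 : (j:ℕ) < 2*n := by have := j.2; omega
  have hk2 : (k:ℕ) < 2*n := by have := k.2; omega
  rw [Matrix.mul_apply]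
  by_cases hk : (k:ℕ) < n
  · rw [Finset.sum_eq_single_of_mem k (Finset.mem_univ k) ?_]
    · simp only [Tf, P2, C2, Matrix.of_apply]
      simp only [hk, if_true, if_pos rfl]
      rw [← zpow_natCast (lam (k:ℕ)) (ep n (j:ℕ)), ← zpow_add₀ (h0 _ hk), ep_cast n j hj2 hn]
      congr 1
      ring
    · intro c _ hc
      simp only [C2, Matrix.of_apply]
      rw [if_neg (fun h => hc (Fin.ext h)), if_neg (by omega), mul_zero]
  · have hkn : (k:ℕ) - n < n := by omega
    have hne : (⟨(k:ℕ)-n, by omega⟩ : Fin (2*n-1+1)) ≠ k := by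
      simp only [ne_eq, Fin.ext_iff]; omega
    have hlam : lam ((k:ℕ)-n) ≠ 0 := h0 _ hkn
    rw [sum_two _ ⟨(k:ℕ)-n, by omega⟩ k hne ?_]
    · simp only [Tf, P2, C2, Matrix.of_apply]
      simp only [show ¬((k:ℕ)-n = (k:ℕ)) by omega, show ((k:ℕ)-n) + n = (k:ℕ) by omega,
        hk, hkn, if_true, if_false, eq_self_iff_true, if_pos rfl, if_neg hk]
      by_cases hep : ep n (j:ℕ) = 0
      · have hE : E n (j:ℕ) = -((n:ℤ)-1) := by
          have := ep_cast n j hj2 hn; omega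
        rw [hep, hE]
        push_cast
        simp
      · have hE := ep_cast n j hj2 hn
        have h1 : ((ep n (j:ℕ) - 1 : ℕ) : ℤ) = ((ep n (j:ℕ) : ℕ) : ℤ) - 1 := by omega
        rw [← zpow_natCast (lam ((k:ℕ)-n)) (ep n (j:ℕ)),
            ← zpow_natCast (lam ((k:ℕ)-n)) (ep n (j:ℕ) - 1), h1]
        have hEe : E n (j:ℕ) = ((ep n (j:ℕ) : ℕ) : ℤ) - ((n:ℤ)-1) := by omega
        rw [hEe]
        rw [show ((ep n (j:ℕ) : ℕ) : ℤ) - ((n:ℤ)-1) = ↑(ep n (j:ℕ)) + (-((n:ℤ)-1)) from by ring,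
            show ((ep n (j:ℕ) : ℕ) : ℤ) - 1 = ↑(ep n (j:ℕ)) + (-1 : ℤ) from by ring,
            show (-((n:ℤ)-2)) = (-((n:ℤ)-1)) + 1 from by ring]
        simp only [zpow_add₀ hlam, zpow_one, _root_.zpow_neg_one]
        push_cast
        field_simp
        ring
    · intro c hc1 hc2
      simp only [C2, Matrix.of_apply]
      rw [if_neg (fun h => hc2 (Fin.ext h)), if_neg ?_, mul_zero]
      intro h
      exact hc1 (Fin.ext (by simp; omega))

lemma detC2 (hn : 1 ≤ n) (h0 : ∀ l < n, lam l ≠ 0) :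
    (C2 n lam).det = ∏ l ∈ range n, lam l ^ (-(2*(n:ℤ)-3)) := by
  rw [Matrix.det_of_upperTriangular ?_]
  · have h1 : ∏ i : Fin (2*n-1+1), C2 n lam i i
        = ∏ q ∈ range (2*n-1+1),
            (if q < n then lam q ^ (-((n:ℤ)-1)) else lam (q-n) ^ (-((n:ℤ)-2))) := by
      rw [← Fin.prod_univ_eq_prod_range]
      exact Finset.prod_congr rfl (fun i _ => by simp [C2])
    rw [h1, show 2*n-1+1 = n + n from by omega, Finset.prod_range_add,
      ← Finset.prod_mul_distrib]
    apply Finset.prod_congr rfl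
    intro i hi
    rw [mem_range] at hi
    rw [if_pos hi, if_neg (by omega), Nat.add_sub_cancel_left (n := n) (m := i),
      ← zpow_add₀ (h0 _ hi)]
    congr 1
    ring
  · intro i j hij
    replace hij : (j:ℕ) < (i:ℕ) := hij
    simp only [C2, Matrix.of_apply]
    rw [if_neg (by omega), if_neg (by omega)]


def Tg : Matrix (Fin (2*n-1)) (Fin (2*n-1)) ℂ := .of fun j k =>
  let e : ℤ :=
    if (j : ℕ) < n - 1 then (j : ℤ) + 1
    else if (j : ℕ) < 2 * n - 2 then -((j : ℤ) - ((n : ℤ) - 1) + 1)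
    else (n : ℤ)
  if (k : ℕ) < n - 1 then
    lam k ^ e - lam (n - 1) ^ e
  else ((e : ℂ)) * lam ((k : ℕ) - (n - 1)) ^ e

lemma step1 (hn : 1 ≤ n) : (Tp n lam).det = (Tg n lam).det := by
  rw [Matrix.det_succ_row (Tp n lam) ⟨n-1, by omega⟩]
  have hE0 : E n (n-1) = 0 := by unfold E; split_ifs <;> omega
  rw [Finset.sum_eq_single_of_mem ⟨n-1, by omega⟩ (Finset.mem_univ _) ?_]
  · have hv : ((⟨n-1, by omega⟩ : Fin (2*n-1+1)) : ℕ) = n - 1 := rfl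
    have h1 : Tp n lam ⟨n-1, by omega⟩ ⟨n-1, by omega⟩ = 1 := by
      simp only [Tp, Matrix.of_apply, hv, hE0]
      rw [if_neg (by omega), if_pos (by omega), zpow_zero]
    rw [h1]
    have h2 : ((-1 : ℂ) ^ (((⟨n-1, by omega⟩ : Fin (2*n-1+1)) : ℕ)
        + ((⟨n-1, by omega⟩ : Fin (2*n-1+1)) : ℕ))) = 1 :=
      Even.neg_one_pow ⟨((⟨n-1, by omega⟩ : Fin (2*n-1+1)) : ℕ), rfl⟩
    rw [h2]
    simp only [one_mul, mul_one]
    congr 1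
    ext i k
    have hsA : ∀ i : Fin (2*n-1),
        (((⟨n-1, by omega⟩ : Fin (2*n-1+1)).succAbove i) : ℕ)
          = if (i:ℕ) < n-1 then (i:ℕ) else (i:ℕ)+1 := by
      intro i
      simp only [Fin.succAbove, Fin.lt_def, Fin.coe_castSucc]
      split_ifs with h
      · rfl
      · simp [Fin.val_succ]
    have hi2 := i.2
    have hk2 := k.2
    simp only [Matrix.submatrix_apply, Tp, Tg, Matrix.of_apply]
    have hrow : E n (((⟨n-1, by omega⟩ : Fin (2*n-1+1)).succAbove i) : ℕ)
        = (if (i : ℕ) < n - 1 then (i : ℤ) + 1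
          else if (i : ℕ) < 2 * n - 2 then -((i : ℤ) - ((n : ℤ) - 1) + 1)
          else (n : ℤ)) := by
      rw [hsA i]; unfold E; split_ifs <;> omega
    rw [hrow, hsA k]
    by_cases hk : (k:ℕ) < n-1
    · rw [if_pos hk, if_pos hk, if_pos hk]
    · rw [if_neg hk, if_neg hk, if_neg (by omega : ¬ ((k:ℕ)+1 < n-1)),
        if_neg (by omega : ¬ ((k:ℕ)+1 < n))]
      rw [show (k:ℕ)+1-n = (k:ℕ)-(n-1) from by omega]
  · intro c _ hc
    have hc2 := c.2
    have hcv : (c : ℕ) ≠ n - 1 := fun h => hc (Fin.ext h)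
    simp only [Tp, Matrix.of_apply, hE0]
    by_cases h1 : (c:ℕ) < n-1
    · simp [h1]
    · rw [if_neg h1]
      by_cases h2 : (c:ℕ) < n
      · exfalso; omega
      · rw [if_neg h2]
        push_cast
        ring





def epinv (n : ℕ) (q : ℕ) : ℕ :=
  if q < n then 2 * n - 2 - q else if q < 2 * n - 1 then q - n else 2 * n - 1
lemma epinv_ep (n : ℕ) (j : ℕ) (hj : j < 2 * n) : epinv n (ep n j) = j := by
  unfold ep epinv; split_ifs <;> omega
def pt (n : ℕ) (q : ℕ) : ℕ :=
  if q < n - 1 then n - 2 - q else if q = n - 1 then n - 1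
    else if q < 2 * n - 1 then q - n else n - 1
lemma pt_lt (n : ℕ) (hn : 1 ≤ n) (q : ℕ) : pt n q < n := by
  unfold pt; split_ifs <;> omega

variable (n : ℕ) (lam : ℕ → ℂ) (t : ℂ)

def u (k : ℕ) : ℂ := if k < n then lam k else lam (k - n) + t
def vv (q : ℕ) : ℂ := u n lam t (epinv n q)

def eE : Equiv.Perm (Fin (2*n-1+1)) :=
  ⟨fun j => ⟨ep n j, by have := j.2; unfold ep; split_ifs <;> omega⟩,
   fun q => ⟨epinv n q, by have := q.2; unfold epinv; split_ifs <;> omega⟩,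
   fun j => by
     apply Fin.ext
     have := j.2
     show epinv n (ep n (j:ℕ)) = (j:ℕ)
     unfold ep epinv; split_ifs <;> omega,
   fun q => by
     apply Fin.ext
     have := q.2
     show ep n (epinv n (q:ℕ)) = (q:ℕ)
     unfold ep epinv; split_ifs <;> omega⟩

def Gm : Matrix (Fin (2*n-1+1)) (Fin (2*n-1+1)) ℂ := .of fun j k =>
  u n lam t (k:ℕ) ^ ep n (j:ℕ)

def Fm : Matrix (Fin (2*n-1+1)) (Fin (2*n-1+1)) ℂ := .of fun j k =>
  if (k:ℕ) < n then lam (k:ℕ) ^ ep n (j:ℕ)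
  else ((lam ((k:ℕ)-n) + t) ^ ep n (j:ℕ) - lam ((k:ℕ)-n) ^ ep n (j:ℕ)) / t

def C4 : Matrix (Fin (2*n-1+1)) (Fin (2*n-1+1)) ℂ := .of fun j k =>
  if (j:ℕ) = (k:ℕ) then (if (k:ℕ) < n then 1 else 1/t)
  else if (k:ℕ) = (j:ℕ) + n then -(1/t) else 0

lemma detGm (hn : 1 ≤ n) :
    (Gm n lam t).det = ∏ i : Fin (2*n-1+1), ∏ j ∈ Ioi i, (vv n lam t j - vv n lam t i) := by
  have h : Gm n lam t = ((Matrix.vandermonde (fun q : Fin (2*n-1+1) => vv n lam t q)).submatrix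
      (eE n) (eE n))ᵀ := by
    ext j k
    simp only [Gm, Matrix.of_apply, Matrix.transpose_apply, Matrix.submatrix_apply,
      Matrix.vandermonde]
    show u n lam t (k:ℕ) ^ ep n (j:ℕ) = vv n lam t (ep n (k:ℕ)) ^ (ep n (j:ℕ))
    unfold vv
    rw [epinv_ep n (k:ℕ) (by have := k.2; omega)]
  rw [h, Matrix.det_transpose, Matrix.det_submatrix_equiv_self, Matrix.det_vandermonde]



lemma FmGm (hn : 1 ≤ n) : Fm n lam t = Gm n lam t * C4 n t := by
  ext j k
  rw [Matrix.mul_apply]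
  by_cases hk : (k:ℕ) < n
  · rw [Finset.sum_eq_single_of_mem k (Finset.mem_univ k) ?_]
    · simp only [Fm, Gm, C4, u, Matrix.of_apply, if_pos hk, if_pos rfl, eq_self_iff_true,
        if_true, mul_one]
    · intro c _ hc
      simp only [C4, Matrix.of_apply]
      rw [if_neg (fun h => hc (Fin.ext h)), if_neg (by omega), mul_zero]
  · have hk2 : (k:ℕ) < 2*n := by have := k.2; omega
    have hkn : (k:ℕ) - n < n := by omega
    have hne : (⟨(k:ℕ)-n, by omega⟩ : Fin (2*n-1+1)) ≠ k := by
      simp only [ne_eq, Fin.ext_iff]; omega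
    rw [sum_two _ ⟨(k:ℕ)-n, by omega⟩ k hne ?_]
    · simp only [Fm, Gm, C4, u, Matrix.of_apply]
      simp only [show ¬((k:ℕ)-n = (k:ℕ)) by omega, show ((k:ℕ)-n) + n = (k:ℕ) by omega,
        hk, hkn, if_true, if_false, eq_self_iff_true, if_pos rfl, if_neg hk]
      ring
    · intro c hc1 hc2
      simp only [C4, Matrix.of_apply]
      rw [if_neg (fun h => hc2 (Fin.ext h)), if_neg ?_, mul_zero]
      intro h
      exact hc1 (Fin.ext (by simp; omega))

lemma detC4 (hn : 1 ≤ n) : (C4 n t).det = (1/t)^n := by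
  rw [Matrix.det_of_upperTriangular ?_]
  · have h1 : ∏ i : Fin (2*n-1+1), C4 n t i i
        = ∏ q ∈ range (2*n-1+1), (if q < n then (1:ℂ) else 1/t) := by
      rw [← Fin.prod_univ_eq_prod_range]
      exact Finset.prod_congr rfl (fun i _ => by simp [C4])
    rw [h1, show 2*n-1+1 = n + n from by omega, Finset.prod_range_add]
    have h2 : ∀ i ∈ range n, (if i < n then (1:ℂ) else 1/t) = 1 := by
      intro i hi; rw [mem_range] at hi; simp [hi]
    have h3 : ∀ i ∈ range n, (if n + i < n then (1:ℂ) else 1/t) = 1/t := by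
      intro i hi; rw [if_neg (by omega)]
    rw [Finset.prod_congr rfl h2, Finset.prod_congr rfl h3]
    simp [Finset.prod_const, Finset.card_range]
  · intro i j hij
    replace hij : (j:ℕ) < (i:ℕ) := hij
    simp only [C4, Matrix.of_apply]
    rw [if_neg (by omega), if_neg (by omega)]

lemma vv_plusc (a : ℕ) (hn : 1 ≤ n) (ha : a < n-1) : vv n lam t (n-2-a) = lam a + t := by
  unfold vv epinv u
  rw [if_pos (by omega : n-2-a < n), show 2*n-2-(n-2-a) = n+a from by omega,
    if_neg (by omega : ¬ (n+a < n)), show n+a-n = a from by omega]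

lemma vv_plainc (a : ℕ) (hn : 1 ≤ n) (ha : a < n-1) : vv n lam t (n+a) = lam a := by
  unfold vv epinv u
  rw [if_neg (by omega : ¬ (n+a < n)), if_pos (by omega : n+a < 2*n-1),
    show n+a-n = a from by omega, if_pos (by omega : a < n)]

lemma vv_mid (hn : 1 ≤ n) : vv n lam t (n-1) = lam (n-1) := by
  unfold vv epinv u
  rw [if_pos (by omega : n-1 < n), show 2*n-2-(n-1) = n-1 from by omega,
    if_pos (by omega : n-1 < n)]

lemma vv_last (hn : 1 ≤ n) : vv n lam t (2*n-1) = lam (n-1) + t := by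
  unfold vv epinv u
  rw [if_neg (by omega : ¬ (2*n-1 < n)), if_neg (by omega : ¬ (2*n-1 < 2*n-1)),
    if_neg (by omega : ¬ (2*n-1 < n)), show 2*n-1-n = n-1 from by omega]

lemma prod_pairs {M : Type*} [CommMonoid M] {m : ℕ} (f : Fin m → Fin m → M) :
    (∏ i : Fin m, ∏ j ∈ Ioi i, f i j)
      = ∏ p ∈ (univ ×ˢ univ : Finset (Fin m × Fin m)).filter (fun p => p.1 < p.2), f p.1 p.2 := by
  rw [Finset.prod_filter, Finset.prod_product]
  apply Finset.prod_congr rfl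
  intro i _
  rw [← Finset.prod_filter]
  congr 1
  ext j
  simp [Finset.mem_filter]

def PairsN : Finset (Fin (2*n-1+1) × Fin (2*n-1+1)) :=
  (univ ×ˢ univ).filter (fun p => p.1 < p.2)

lemma same_char (hn : 1 ≤ n) (p q : ℕ) (hp : p < 2*n) (hq : q < 2*n) (hlt : p < q)
    (hsame : pt n p = pt n q) :
    (pt n p < n-1 ∧ p = n-2-pt n p ∧ q = n+pt n p)
      ∨ (¬(pt n p < n-1) ∧ p = n-1 ∧ q = 2*n-1) := by
  revert hsame
  unfold pt
  split_ifs <;> omega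

lemma prodS1 (hn : 1 ≤ n) :
    ∏ p ∈ (PairsN n).filter (fun p => pt n (p.1:ℕ) = pt n (p.2:ℕ)),
        (vv n lam t (p.2:ℕ) - vv n lam t (p.1:ℕ))
      = (-t)^(n-1) * t := by
  have hmem : ∀ p : Fin (2*n-1+1) × Fin (2*n-1+1),
      p ∈ (PairsN n).filter (fun p => pt n (p.1:ℕ) = pt n (p.2:ℕ)) ↔
        ((p.1:ℕ) < (p.2:ℕ) ∧ pt n (p.1:ℕ) = pt n (p.2:ℕ)) := by
    intro p
    simp only [PairsN, Finset.mem_filter, Finset.mem_product, Finset.mem_univ, true_and,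
      Fin.lt_def, and_true]
  refine Eq.trans (Finset.prod_nbij' (i := fun p => (⟨pt n (p.1:ℕ), pt_lt n hn _⟩ : Fin n))
    (j := fun a => if (a:ℕ) < n-1 then
        ((⟨n-2-(a:ℕ), by omega⟩ : Fin (2*n-1+1)), (⟨n+(a:ℕ), by omega⟩ : Fin (2*n-1+1)))
      else ((⟨n-1, by omega⟩ : Fin (2*n-1+1)), (⟨2*n-1, by omega⟩ : Fin (2*n-1+1))))
    (t := (univ : Finset (Fin n)))
    (g := fun a => if (a:ℕ) < n-1 then -t else t) ?_ ?_ ?_ ?_ ?_) ?_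
  pick_goal 6
  · -- now evaluate ∏ a : Fin n, (if a < n-1 then -t else t)
    rw [← Finset.prod_erase_mul univ _ (Finset.mem_univ (⟨n-1, by omega⟩ : Fin n))]
    have h1 : ∀ x ∈ (univ : Finset (Fin n)).erase ⟨n-1, by omega⟩,
        (if (x:ℕ) < n-1 then -t else t) = -t := by
      intro x hx
      have hxe := Finset.ne_of_mem_erase hx
      have : (x:ℕ) ≠ n-1 := fun h => hxe (Fin.ext h)
      have := x.2
      rw [if_pos (by omega)]
    rw [Finset.prod_congr rfl h1, Finset.prod_const, if_neg (by simp),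
      Finset.card_erase_of_mem (Finset.mem_univ _), Finset.card_univ, Fintype.card_fin]
  · intro p hp
    exact Finset.mem_univ _
  · intro a _
    rw [hmem]
    by_cases ha : (a:ℕ) < n-1
    · rw [if_pos ha]
      refine ⟨by simp; omega, ?_⟩
      show pt n (n-2-(a:ℕ)) = pt n (n+(a:ℕ))
      unfold pt; split_ifs <;> omega
    · rw [if_neg ha]
      have := a.2
      refine ⟨by simp; omega, ?_⟩
      show pt n (n-1) = pt n (2*n-1)
      unfold pt; split_ifs <;> omega
  · intro p hp
    rw [hmem] at hp
    have h1 := (p.1).2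
    have h2 := (p.2).2
    rcases same_char n hn _ _ (by omega) (by omega) hp.1 hp.2 with ⟨hc, e1, e2⟩ | ⟨hc, e1, e2⟩
    · dsimp only
      rw [if_pos hc]
      ext
      · simp; omega
      · simp; omega
    · dsimp only
      rw [if_neg hc]
      ext
      · simp; omega
      · simp; omega
  · intro a _
    by_cases ha : (a:ℕ) < n-1
    · rw [if_pos ha]
      apply Fin.ext
      show pt n (n-2-(a:ℕ)) = (a:ℕ)
      unfold pt; split_ifs <;> omega
    · rw [if_neg ha]
      apply Fin.ext
      show pt n (n-1) = (a:ℕ)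
      have := a.2
      unfold pt; split_ifs <;> omega
  · intro p hp
    rw [hmem] at hp
    have h1 := (p.1).2
    have h2 := (p.2).2
    rcases same_char n hn _ _ (by omega) (by omega) hp.1 hp.2 with ⟨hc, e1, e2⟩ | ⟨hc, e1, e2⟩
    · dsimp only
      rw [if_pos hc, e2, e1]
      rw [show n + pt n (n-2-pt n (p.1:ℕ)) = n + pt n (p.1:ℕ) from by
        congr 1; unfold pt; split_ifs <;> omega]
      rw [vv_plainc n lam t _ hn hc, vv_plusc n lam t _ hn hc]
      ring
    · dsimp only
      rw [if_neg hc, e2, e1]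
      rw [vv_last n lam t hn, vv_mid n lam t hn]
      ring

def isP (n : ℕ) (q : ℕ) : Bool := decide (q < n - 1 ∨ 2 * n - 1 ≤ q)

def pos (n : ℕ) (a : ℕ) (c : Bool) : ℕ :=
  if c then (if a < n - 1 then n - 2 - a else 2 * n - 1)
  else (if a < n - 1 then n + a else n - 1)

lemma pos_lt (hn : 1 ≤ n) (a : ℕ) (ha : a < n) (c : Bool) : pos n a c < 2*n-1+1 := by
  unfold pos; cases c <;> simp only [if_true, if_false, Bool.false_eq_true] <;>
    split_ifs <;> omega

lemma pt_pos (hn : 1 ≤ n) (a : ℕ) (ha : a < n) (c : Bool) : pt n (pos n a c) = a := by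
  unfold pos pt
  cases c <;> simp only [if_true, if_false, Bool.false_eq_true] <;> split_ifs <;> omega

lemma isP_pos (hn : 1 ≤ n) (a : ℕ) (ha : a < n) (c : Bool) : isP n (pos n a c) = c := by
  unfold pos isP
  cases c <;> simp only [if_true, if_false, Bool.false_eq_true, decide_eq_true_eq,
    decide_eq_false_iff_not] <;> split_ifs <;> simp <;> omega

lemma pos_pt_isP (hn : 1 ≤ n) (q : ℕ) (hq : q < 2*n) : pos n (pt n q) (isP n q) = q := by
  by_cases h : q < n - 1 ∨ 2 * n - 1 ≤ q
  · have hI : isP n q = true := by simp only [isP, decide_eq_true_eq]; exact h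
    rw [hI]
    unfold pos pt
    simp only [if_true]
    split_ifs <;> omega
  · have hI : isP n q = false := by simp only [isP, decide_eq_false_iff_not]; exact h
    rw [hI]
    unfold pos pt
    simp only [Bool.false_eq_true, if_false]
    split_ifs <;> omega

def PairsS : Finset (Fin n × Fin n) := (univ ×ˢ univ).filter (fun p => p.1 < p.2)

lemma Zval (hn : 1 ≤ n) :
    ∏ p ∈ (PairsN n).filter (fun p => ¬ pt n (p.1:ℕ) = pt n (p.2:ℕ)),
        (lam (pt n (p.2:ℕ)) - lam (pt n (p.1:ℕ)))
      = (-1)^(n-1) * ∏ p ∈ PairsS n, (lam (p.2:ℕ) - lam (p.1:ℕ))^4 := by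
  have hmem : ∀ p : Fin (2*n-1+1) × Fin (2*n-1+1),
      p ∈ (PairsN n).filter (fun p => ¬ pt n (p.1:ℕ) = pt n (p.2:ℕ)) ↔
        ((p.1:ℕ) < (p.2:ℕ) ∧ ¬ pt n (p.1:ℕ) = pt n (p.2:ℕ)) := by
    intro p
    simp only [PairsN, Finset.mem_filter, Finset.mem_product, Finset.mem_univ, true_and,
      Fin.lt_def, and_true]
  have hmemS : ∀ q : (Fin n × Fin n) × (Bool × Bool),
      q ∈ (PairsS n) ×ˢ (univ : Finset (Bool × Bool)) ↔ (q.1.1:ℕ) < (q.1.2:ℕ) := by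
    intro q
    simp only [PairsS, Finset.mem_product, Finset.mem_filter, Finset.mem_univ, true_and,
      Fin.lt_def, and_true]
  have step : ∏ p ∈ (PairsN n).filter (fun p => ¬ pt n (p.1:ℕ) = pt n (p.2:ℕ)),
        (lam (pt n (p.2:ℕ)) - lam (pt n (p.1:ℕ)))
      = ∏ q ∈ (PairsS n) ×ˢ (univ : Finset (Bool × Bool)),
          (if pos n (q.1.1:ℕ) q.2.1 < pos n (q.1.2:ℕ) q.2.2
            then lam (q.1.2:ℕ) - lam (q.1.1:ℕ) else lam (q.1.1:ℕ) - lam (q.1.2:ℕ)) := by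
    refine Finset.prod_nbij'
      (i := fun p => if pt n (p.1:ℕ) < pt n (p.2:ℕ)
        then (((⟨pt n (p.1:ℕ), pt_lt n hn _⟩ : Fin n), (⟨pt n (p.2:ℕ), pt_lt n hn _⟩ : Fin n)),
              (isP n (p.1:ℕ), isP n (p.2:ℕ)))
        else (((⟨pt n (p.2:ℕ), pt_lt n hn _⟩ : Fin n), (⟨pt n (p.1:ℕ), pt_lt n hn _⟩ : Fin n)),
              (isP n (p.2:ℕ), isP n (p.1:ℕ))))
      (j := fun q => if pos n (q.1.1:ℕ) q.2.1 < pos n (q.1.2:ℕ) q.2.2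
        then ((⟨pos n (q.1.1:ℕ) q.2.1, pos_lt n hn _ (q.1.1).2 _⟩ : Fin (2*n-1+1)),
              (⟨pos n (q.1.2:ℕ) q.2.2, pos_lt n hn _ (q.1.2).2 _⟩ : Fin (2*n-1+1)))
        else ((⟨pos n (q.1.2:ℕ) q.2.2, pos_lt n hn _ (q.1.2).2 _⟩ : Fin (2*n-1+1)),
              (⟨pos n (q.1.1:ℕ) q.2.1, pos_lt n hn _ (q.1.1).2 _⟩ : Fin (2*n-1+1))))
      ?_ ?_ ?_ ?_ ?_
    · intro p hp
      rw [hmem] at hp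
      rw [hmemS]
      by_cases hc : pt n (p.1:ℕ) < pt n (p.2:ℕ)
      · rw [if_pos hc]; exact hc
      · rw [if_neg hc]; dsimp only; omega
    · intro q hq
      rw [hmemS] at hq
      rw [hmem]
      have ha := (q.1.1).2
      have hb := (q.1.2).2
      have hab : (q.1.1:ℕ) ≠ (q.1.2:ℕ) := by omega
      have hpp : pos n (q.1.1:ℕ) q.2.1 ≠ pos n (q.1.2:ℕ) q.2.2 := by
        intro h
        apply hab
        rw [← pt_pos n hn _ ha q.2.1, ← pt_pos n hn _ hb q.2.2, h]
      by_cases hc : pos n (q.1.1:ℕ) q.2.1 < pos n (q.1.2:ℕ) q.2.2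
      · rw [if_pos hc]
        dsimp only
        refine ⟨hc, ?_⟩
        rw [pt_pos n hn _ ha, pt_pos n hn _ hb]
        omega
      · rw [if_neg hc]
        dsimp only
        refine ⟨by omega, ?_⟩
        rw [pt_pos n hn _ hb, pt_pos n hn _ ha]
        omega
    · intro p hp
      rw [hmem] at hp
      have h1 : (p.1:ℕ) < 2*n := by have := (p.1).2; omega
      have h2 : (p.2:ℕ) < 2*n := by have := (p.2).2; omega
      have e1 := pos_pt_isP n hn _ h1
      have e2 := pos_pt_isP n hn _ h2
      by_cases hc : pt n (p.1:ℕ) < pt n (p.2:ℕ)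
      · rw [if_pos hc]
        dsimp only
        rw [if_pos (show pos n (pt n (p.1:ℕ)) (isP n (p.1:ℕ))
            < pos n (pt n (p.2:ℕ)) (isP n (p.2:ℕ)) from by rw [e1, e2]; exact hp.1)]
        ext
        · simp [e1]
        · simp [e2]
      · rw [if_neg hc]
        dsimp only
        rw [if_neg (show ¬ (pos n (pt n (p.2:ℕ)) (isP n (p.2:ℕ))
            < pos n (pt n (p.1:ℕ)) (isP n (p.1:ℕ))) from by rw [e1, e2]; omega)]
        ext
        · simp [e1]
        · simp [e2]
    · intro q hq
      rw [hmemS] at hq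
      have ha := (q.1.1).2
      have hb := (q.1.2).2
      have f1 := pt_pos n hn _ ha q.2.1
      have f2 := pt_pos n hn _ hb q.2.2
      have g1 := isP_pos n hn _ ha q.2.1
      have g2 := isP_pos n hn _ hb q.2.2
      by_cases hc : pos n (q.1.1:ℕ) q.2.1 < pos n (q.1.2:ℕ) q.2.2
      · rw [if_pos hc]
        dsimp only
        rw [if_pos (show pt n (pos n (q.1.1:ℕ) q.2.1) < pt n (pos n (q.1.2:ℕ) q.2.2) from by
          rw [f1, f2]; exact hq)]
        ext
        · simp [f1]
        · simp [f2]
        · simp [g1]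
        · simp [g2]
      · rw [if_neg hc]
        dsimp only
        rw [if_neg (show ¬ (pt n (pos n (q.1.2:ℕ) q.2.2) < pt n (pos n (q.1.1:ℕ) q.2.1)) from by
          rw [f1, f2]; omega)]
        ext
        · simp [f1]
        · simp [f2]
        · simp [g1]
        · simp [g2]
    · intro p hp
      rw [hmem] at hp
      have h1 : (p.1:ℕ) < 2*n := by have := (p.1).2; omega
      have h2 : (p.2:ℕ) < 2*n := by have := (p.2).2; omega
      have e1 := pos_pt_isP n hn _ h1
      have e2 := pos_pt_isP n hn _ h2
      by_cases hc : pt n (p.1:ℕ) < pt n (p.2:ℕ)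
      · rw [if_pos hc]
        dsimp only
        rw [if_pos (show pos n (pt n (p.1:ℕ)) (isP n (p.1:ℕ))
            < pos n (pt n (p.2:ℕ)) (isP n (p.2:ℕ)) from by rw [e1, e2]; exact hp.1)]
      · rw [if_neg hc]
        dsimp only
        rw [if_neg (show ¬ (pos n (pt n (p.2:ℕ)) (isP n (p.2:ℕ))
            < pos n (pt n (p.1:ℕ)) (isP n (p.1:ℕ))) from by rw [e1, e2]; omega)]
  rw [step, Finset.prod_product]
  have inner : ∀ p ∈ PairsS n,
      (∏ cd : Bool × Bool, (if pos n ((p:Fin n × Fin n).1:ℕ) cd.1 < pos n (p.2:ℕ) cd.2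
          then lam (p.2:ℕ) - lam (p.1:ℕ) else lam (p.1:ℕ) - lam (p.2:ℕ)))
        = (if (p.2:ℕ) = n-1 then -1 else 1) * (lam (p.2:ℕ) - lam (p.1:ℕ))^4 := by
    intro p hp
    have hab : (p.1:ℕ) < (p.2:ℕ) := by
      simp only [PairsS, Finset.mem_filter, Fin.lt_def] at hp
      exact hp.2
    have hb := (p.2).2
    have ha : (p.1:ℕ) < n-1 := by omega
    rw [Fintype.prod_prod_type, Fintype.prod_bool, Fintype.prod_bool, Fintype.prod_bool]
    simp only [pos, if_true, Bool.false_eq_true, if_false]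
    split_ifs <;> first | ring1 | (exfalso; omega)
  rw [Finset.prod_congr rfl inner, Finset.prod_mul_distrib]
  congr 1
  -- ∏ (if p.2 = n-1 then -1 else 1) = (-1)^(n-1)
  rw [Finset.prod_ite (fun _ => (-1:ℂ)) (fun _ => (1:ℂ)), Finset.prod_const, Finset.prod_const,
    one_pow, mul_one]
  congr 1
  rw [Finset.card_nbij' (i := fun p => ((p:Fin n × Fin n).1 : ℕ))
    (j := fun a => ((⟨a % n, Nat.mod_lt _ (by omega)⟩ : Fin n), (⟨n-1, by omega⟩ : Fin n)))
    (t := range (n-1)) ?_ ?_ ?_ ?_, Finset.card_range]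
  · intro p hp
    simp only [PairsS, Finset.mem_filter, Finset.mem_product, Finset.mem_univ, true_and,
      Fin.lt_def, Finset.mem_coe] at hp
    rw [Finset.mem_coe, mem_range]
    dsimp only
    have hb := (p.2).2
    omega
  · intro a ha
    rw [Finset.mem_coe, mem_range] at ha
    simp only [PairsS, Finset.mem_filter, Finset.mem_product, Finset.mem_univ, true_and,
      Fin.lt_def, Finset.mem_coe]
    have h1 : a % n = a := Nat.mod_eq_of_lt (by omega)
    constructor
    · show a % n < n-1
      omega
    · simp
  · intro p hp
    simp only [PairsS, Finset.mem_filter, Finset.mem_product, Finset.mem_univ, true_and,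
      Fin.lt_def, Finset.mem_coe] at hp
    have hb := (p.2).2
    dsimp only
    ext
    · show ((p.1:ℕ) % n) = (p.1:ℕ)
      exact Nat.mod_eq_of_lt (by omega)
    · show (n-1:ℕ) = (p.2:ℕ)
      omega
  · intro a ha
    rw [Finset.mem_coe, mem_range] at ha
    show a % n = a
    exact Nat.mod_eq_of_lt (by omega)



lemma detFm (hn : 1 ≤ n) (ht : t ≠ 0) :
    (Fm n lam t).det = (-1)^(n-1) *
      ∏ p ∈ (PairsN n).filter (fun p => ¬ pt n (p.1:ℕ) = pt n (p.2:ℕ)),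
        (vv n lam t (p.2:ℕ) - vv n lam t (p.1:ℕ)) := by
  rw [FmGm n lam t hn, Matrix.det_mul, detC4 n t hn, detGm n lam t hn,
    prod_pairs (fun i j => vv n lam t (j:ℕ) - vv n lam t (i:ℕ))]
  rw [show ((univ ×ˢ univ : Finset (Fin (2*n-1+1) × Fin (2*n-1+1))).filter
      (fun p => p.1 < p.2)) = PairsN n from rfl]
  rw [← Finset.prod_filter_mul_prod_filter_not (PairsN n)
    (fun p => pt n (p.1:ℕ) = pt n (p.2:ℕ)), prodS1 n lam t hn]
  have key : (-t)^(n-1) * t * (1/t)^n = (-1)^(n-1) := by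
    have h1 : t ^ (n-1) * t = t ^ n := by
      rw [← pow_succ]; congr 1; omega
    calc (-t)^(n-1) * t * (1/t)^n
        = (-1)^(n-1) * (t^(n-1) * t) * (t^n)⁻¹ := by
          rw [neg_pow, one_div, inv_pow]; ring
      _ = (-1)^(n-1) * (t^n * (t^n)⁻¹) := by rw [h1]; ring
      _ = (-1)^(n-1) := by rw [mul_inv_cancel₀ (pow_ne_zero n ht), mul_one]
  calc ((-t)^(n-1) * t *
        ∏ p ∈ (PairsN n).filter (fun p => ¬ pt n (p.1:ℕ) = pt n (p.2:ℕ)),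
          (vv n lam t (p.2:ℕ) - vv n lam t (p.1:ℕ))) * (1/t)^n
      = ((-t)^(n-1) * t * (1/t)^n) *
        ∏ p ∈ (PairsN n).filter (fun p => ¬ pt n (p.1:ℕ) = pt n (p.2:ℕ)),
          (vv n lam t (p.2:ℕ) - vv n lam t (p.1:ℕ)) := by ring
    _ = _ := by rw [key]

lemma vv_tendsto (hn : 1 ≤ n) (q : ℕ) (hq : q < 2*n) :
    Filter.Tendsto (fun t => vv n lam t q) (nhdsWithin (0:ℂ) {(0:ℂ)}ᶜ) (nhds (lam (pt n q))) := by
  have hch1 : epinv n q < n → pt n q = epinv n q := by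
    unfold pt epinv; intro h2; split_ifs at h2 ⊢ <;> omega
  have hch2 : ¬ epinv n q < n → pt n q = epinv n q - n := by
    unfold pt epinv; intro h2; split_ifs at h2 ⊢ <;> omega
  unfold vv u
  by_cases h : epinv n q < n
  · rw [hch1 h]
    simp only [if_pos h]
    exact tendsto_const_nhds
  · rw [hch2 h]
    simp only [if_neg h]
    have : Filter.Tendsto (fun t : ℂ => lam (epinv n q - n) + t) (nhds 0)
        (nhds (lam (epinv n q - n) + 0)) := tendsto_const_nhds.add tendsto_id
    rw [add_zero] at this
    exact this.mono_left nhdsWithin_le_nhds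

lemma detP2 (hn : 1 ≤ n) :
    (P2 n lam).det = ∏ p ∈ PairsS n, (lam ((p.2 : Fin n):ℕ) - lam ((p.1 : Fin n):ℕ))^4 := by
  haveI : (nhdsWithin (0:ℂ) {(0:ℂ)}ᶜ).NeBot := by
    exact Module.punctured_nhds_neBot ℝ ℂ 0
  have lim1 : Filter.Tendsto (fun t => (Fm n lam t).det) (nhdsWithin (0:ℂ) {(0:ℂ)}ᶜ)
      (nhds ((P2 n lam).det)) := by
    have hconv : Filter.Tendsto (fun t => Fm n lam t) (nhdsWithin (0:ℂ) {(0:ℂ)}ᶜ)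
        (nhds (P2 n lam)) := by
      refine tendsto_pi_nhds.2 ?_
      intro j
      refine tendsto_pi_nhds.2 ?_
      intro k
      by_cases hk : (k:ℕ) < n
      · simp only [Fm, P2, Matrix.of_apply, if_pos hk]
        exact tendsto_const_nhds
      · simp only [Fm, P2, Matrix.of_apply, if_neg hk]
        have hd := (hasDerivAt_pow (ep n (j:ℕ)) (lam ((k:ℕ)-n))).tendsto_slope_zero
        simp only [smul_eq_mul] at hd
        have : ∀ t : ℂ, t⁻¹ * ((lam ((k:ℕ)-n) + t) ^ ep n (j:ℕ) - lam ((k:ℕ)-n) ^ ep n (j:ℕ))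
            = ((lam ((k:ℕ)-n) + t) ^ ep n (j:ℕ) - lam ((k:ℕ)-n) ^ ep n (j:ℕ)) / t := by
          intro t; rw [div_eq_inv_mul]
        simp only [this] at hd
        exact hd
    exact ((Continuous.matrix_det (continuous_id)).tendsto (P2 n lam)).comp hconv
  have lim2 : Filter.Tendsto (fun t => (Fm n lam t).det) (nhdsWithin (0:ℂ) {(0:ℂ)}ᶜ)
      (nhds ((-1:ℂ)^(n-1) * ((-1)^(n-1) *
        ∏ p ∈ PairsS n, (lam ((p.2 : Fin n):ℕ) - lam ((p.1 : Fin n):ℕ))^4))) := by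
    have hcross : Filter.Tendsto
        (fun t => (-1:ℂ)^(n-1) * ∏ p ∈ (PairsN n).filter
            (fun p => ¬ pt n (p.1:ℕ) = pt n (p.2:ℕ)),
          (vv n lam t (p.2:ℕ) - vv n lam t (p.1:ℕ)))
        (nhdsWithin (0:ℂ) {(0:ℂ)}ᶜ)
        (nhds ((-1:ℂ)^(n-1) * ∏ p ∈ (PairsN n).filter
            (fun p => ¬ pt n (p.1:ℕ) = pt n (p.2:ℕ)),
          (lam (pt n (p.2:ℕ)) - lam (pt n (p.1:ℕ))))) := by
      apply Filter.Tendsto.const_mul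
      apply tendsto_finset_prod
      intro p hp
      have h1 : (p.1:ℕ) < 2*n := by have := (p.1).2; omega
      have h2 : (p.2:ℕ) < 2*n := by have := (p.2).2; omega
      exact (vv_tendsto n lam hn _ h2).sub (vv_tendsto n lam hn _ h1)
    rw [Zval n lam hn] at hcross
    apply hcross.congr'
    filter_upwards [eventually_mem_nhdsWithin] with t ht
    exact (detFm n lam t hn ht).symm
  have := tendsto_nhds_unique lim1 lim2
  rw [this, ← mul_assoc, ← pow_add]
  rw [Even.neg_one_pow ⟨n-1, by omega⟩, one_mul]


lemma prod_final (n : ℕ) (lam : ℕ → ℂ) (hn : 1 ≤ n) :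
    ∏ p ∈ PairsS n, (lam ((p.2 : Fin n):ℕ) - lam ((p.1 : Fin n):ℕ))^4
      = ∏ j ∈ range n, ∏ k ∈ Ioo j n, (lam k - lam j)^4 := by
  have h1 : ∏ p ∈ PairsS n, (lam ((p.2 : Fin n):ℕ) - lam ((p.1 : Fin n):ℕ))^4
      = ∏ a : Fin n, ∏ b ∈ Ioi a, (lam (b:ℕ) - lam (a:ℕ))^4 :=
    (prod_pairs (fun a b : Fin n => (lam (b:ℕ) - lam (a:ℕ))^4)).symm
  rw [h1, ← Fin.prod_univ_eq_prod_range (fun j => ∏ k ∈ Ioo j n, (lam k - lam j)^4) n]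
  apply Finset.prod_congr rfl
  intro a _
  refine Finset.prod_nbij' (i := fun b => (b:ℕ))
    (j := fun k => (⟨k % n, Nat.mod_lt _ (by omega)⟩ : Fin n)) ?_ ?_ ?_ ?_ ?_
  · intro b hb
    rw [Finset.mem_Ioi, Fin.lt_def] at hb
    rw [Finset.mem_Ioo]
    exact ⟨hb, b.2⟩
  · intro k hk
    rw [Finset.mem_Ioo] at hk
    rw [Finset.mem_Ioi, Fin.lt_def]
    show (a:ℕ) < k % n
    rw [Nat.mod_eq_of_lt hk.2]
    exact hk.1
  · intro b _
    apply Fin.ext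
    show (b:ℕ) % n = (b:ℕ)
    exact Nat.mod_eq_of_lt b.2
  · intro k hk
    rw [Finset.mem_Ioo] at hk
    show k % n = k
    exact Nat.mod_eq_of_lt hk.2
  · intro b _
    have hbm : (b:ℕ) % n = (b:ℕ) := Nat.mod_eq_of_lt b.2
    simp [hbm]

end
end Stmt2Aux

open Finset

/-- Determinant evaluation (`(\ref{TN})` in the paper): rows indexed by
`j = 1,…,n-1` with entries `(λ_k^j - λ_n^j, j λ_k^j)`, rows `j = 1,…,n-1`
with entries `(λ_k^{-j} - λ_n^{-j}, -j λ_k^{-j})`, and a final row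
`(λ_k^n - λ_n^n, n λ_k^n)`; the value is
`∏_{1≤j<k≤n} (λ_k - λ_j)^4 / ∏_{l=1}^n λ_l^{2n-3}`.
Here `lam 0, …, lam (n-1)` play the role of `λ₁, …, λₙ`. -/
theorem stmt_2 (n : ℕ) (hn : 1 ≤ n) (lam : ℕ → ℂ)
    (h0 : ∀ l < n, lam l ≠ 0)
    (hdist : ∀ l < n, ∀ m < n, l ≠ m → lam l ≠ lam m) :
    (Matrix.of fun j k : Fin (2 * n - 1) =>
        let e : ℤ :=
          if (j : ℕ) < n - 1 then (j : ℤ) + 1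
          else if (j : ℕ) < 2 * n - 2 then -((j : ℤ) - ((n : ℤ) - 1) + 1)
          else (n : ℤ)
        if (k : ℕ) < n - 1 then
          lam k ^ e - lam (n - 1) ^ e
        else ((e : ℂ)) * lam ((k : ℕ) - (n - 1)) ^ e).det
      = (∏ j ∈ range n, ∏ k ∈ Ioo j n, (lam k - lam j) ^ 4) /
          ∏ l ∈ range n, lam l ^ (2 * (n : ℤ) - 3) := by
  have hTg : (Matrix.of fun j k : Fin (2 * n - 1) =>
        let e : ℤ :=
          if (j : ℕ) < n - 1 then (j : ℤ) + 1
          else if (j : ℕ) < 2 * n - 2 then -((j : ℤ) - ((n : ℤ) - 1) + 1)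
          else (n : ℤ)
        if (k : ℕ) < n - 1 then
          lam k ^ e - lam (n - 1) ^ e
        else ((e : ℂ)) * lam ((k : ℕ) - (n - 1)) ^ e) = Stmt2Aux.Tg n lam := rfl
  rw [hTg, ← Stmt2Aux.step1 n lam hn, Stmt2Aux.step2 n lam hn, Matrix.det_mul,
    Stmt2Aux.detC3 n, mul_one, Stmt2Aux.step3 n lam hn h0, Matrix.det_mul,
    Stmt2Aux.detP2 n lam hn, Stmt2Aux.detC2 n lam hn h0,
    Stmt2Aux.prod_final n lam hn]
  rw [div_eq_mul_inv]
  congr 1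
  rw [← Finset.prod_inv_distrib]
  apply Finset.prod_congr rfl
  intro l _
  rw [← _root_.zpow_neg]
end

section
/- For a real symmetric tridiagonal n×n matrix T with diagonal entries a_n,…,a_1 (top to bottom) and off-diagonal entries b_{n-1},…,b_1 all positive, with distinct eigenvalues λ₁ > … > λₙ and q_k > 0 the first component of the normalized eigenvector for λ_k, one has ∏_{1≤i<j≤n}(λ_i - λ_j)² = (∏_{i=1}^{n-1} b_i^{2i}) / (∏_{i=1}^n q_i²). -/
open Finset Matrix

lemma prodprod_aux (b : ℕ → ℝ) : ∀ n : ℕ, ∏ j ∈ range n, ∏ i ∈ range j, b i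
    = ∏ i ∈ range (n-1), b i ^ (n-1-i) := by
  intro n
  induction n with
  | zero => simp
  | succ n ih =>
    rw [prod_range_succ, ih]
    rcases Nat.eq_zero_or_pos n with h | h
    · subst h; simp
    have h1 : ∏ i ∈ range (n-1), b i ^ (n-1-i) = ∏ i ∈ range n, b i ^ (n-1-i) := by
      rw [show n = (n-1)+1 by omega, prod_range_succ]
      simp
    rw [h1, ← prod_mul_distrib]
    simp only [Nat.succ_sub_one]
    apply prod_congr rfl
    intro i hi
    rw [mem_range] at hi
    rw [← pow_succ]
    congr 1
    omega

/-- For a real symmetric tridiagonal `n×n` matrix `T` with positive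
off-diagonal entries, distinct eigenvalues `λ₁ > ⋯ > λₙ` and `q k > 0` the
first component of the normalized eigenvector for `λ k`, one has
`∏_{i<j}(λ_i - λ_j)² = ∏ b_i^{2i} / ∏ q_i²`.  Rows/columns are indexed from
the top, so the off-diagonal entry `b i` (`i = 0,…,n-2`, from the top) is the
paper's `b_{n-1-i}`, whence the exponent `2*(n-1-i)`. -/
theorem stmt_4 (n : ℕ) (hn : 0 < n) (a : Fin n → ℝ) (b : ℕ → ℝ)
    (hb : ∀ i, i < n - 1 → 0 < b i)
    (T : Matrix (Fin n) (Fin n) ℝ)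
    (hT : ∀ i j : Fin n, T i j =
      if (i : ℕ) = j then a i
      else if (i : ℕ) + 1 = j then b i
      else if (j : ℕ) + 1 = i then b j
      else 0)
    (lam : Fin n → ℝ) (hord : StrictAnti lam)
    (q : Fin n → ℝ) (hq : ∀ k, 0 < q k)
    (hev : ∀ k, ∃ v : Fin n → ℝ,
      (∑ i, v i ^ 2 = 1) ∧ T.mulVec v = lam k • v ∧ v ⟨0, hn⟩ = q k) :
    ∏ i, ∏ j ∈ Ioi i, (lam i - lam j) ^ 2
      = (∏ i ∈ range (n - 1), b i ^ (2 * (n - 1 - i))) / ∏ i, q i ^ 2 := by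
  classical
  choose v hnorm heig hfirst using hev
  -- symmetry of T
  have hsymm : ∀ i j : Fin n, T j i = T i j := by
    intro i j
    by_cases h1 : (i : ℕ) = j
    · have : i = j := Fin.ext h1
      subst this; rfl
    by_cases h2 : (i : ℕ) + 1 = j
    · rw [hT, hT]
      simp [h1, h2, show ¬((j:ℕ) = i) from by omega, show ¬((j:ℕ)+1 = (i:ℕ)) from by omega]
    by_cases h3 : (j : ℕ) + 1 = i
    · rw [hT, hT]
      simp [h1, h2, h3, show ¬((j:ℕ) = i) from by omega]
    · rw [hT, hT]
      simp [h1, h2, h3, show ¬((j:ℕ) = i) from by omega]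
  -- orthonormality of the eigenvectors
  have horth : ∀ k l : Fin n, ∑ i, v k i * v l i = if k = l then 1 else 0 := by
    have key : ∀ k l : Fin n, lam k * ∑ i, v k i * v l i = lam l * ∑ i, v k i * v l i := by
      intro k l
      have h1 : ∑ i, (T.mulVec (v k)) i * v l i = ∑ i, v k i * (T.mulVec (v l)) i := by
        simp only [Matrix.mulVec, dotProduct, Finset.sum_mul, Finset.mul_sum]
        rw [Finset.sum_comm]
        apply Finset.sum_congr rfl; intro i _
        apply Finset.sum_congr rfl; intro j _
        rw [hsymm i j]; ring
      rw [heig k, heig l] at h1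
      simp only [Pi.smul_apply, smul_eq_mul, Finset.mul_sum] at h1 ⊢
      calc ∑ i, lam k * (v k i * v l i) = ∑ i, lam k * v k i * v l i := by
            apply Finset.sum_congr rfl; intros; ring
        _ = ∑ i, v k i * (lam l * v l i) := h1
        _ = ∑ i, lam l * (v k i * v l i) := by apply Finset.sum_congr rfl; intros; ring
    intro k l
    by_cases hkl : k = l
    · subst hkl
      simp only [if_pos rfl]
      rw [← hnorm k]
      apply Finset.sum_congr rfl; intros; ring
    · rw [if_neg hkl]
      have hne : lam k ≠ lam l := hord.injective.ne hkl
      have h2 : (lam k - lam l) * ∑ i, v k i * v l i = 0 := by linarith [key k l]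
      rcases mul_eq_zero.mp h2 with h | h
      · exact absurd (by linarith : lam k = lam l) hne
      · exact h
  -- the orthogonal matrix of eigenvectors
  set Q : Matrix (Fin n) (Fin n) ℝ := Matrix.of (fun i k => v k i) with hQdef
  have hQtQ : Qᵀ * Q = 1 := by
    ext k l
    simp only [Matrix.mul_apply, Matrix.transpose_apply, Matrix.one_apply, hQdef,
      Matrix.of_apply]
    rw [← horth k l]
  have hQQt : Q * Qᵀ = 1 := mul_eq_one_comm.mp hQtQ
  have hcompl : ∀ i j : Fin n, ∑ k, v k i * v k j = if i = j then 1 else 0 := by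
    intro i j
    have := congrFun (congrFun hQQt i) j
    simpa [Matrix.mul_apply, Matrix.one_apply, hQdef] using this
  -- the Krylov vectors expanded in the eigenbasis
  have hkry : ∀ j : ℕ, ∀ i : Fin n,
      ((T ^ j).mulVec (fun i' => if i' = ⟨0, hn⟩ then (1:ℝ) else 0)) i
        = ∑ k, q k * lam k ^ j * v k i := by
    intro j
    induction j with
    | zero =>
      intro i
      simp only [pow_zero, Matrix.one_mulVec]
      rw [show (∑ k, q k * (1:ℝ) * v k i) = ∑ k, v k ⟨0,hn⟩ * v k i by
        apply Finset.sum_congr rfl; intros k _; rw [hfirst]; ring]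
      rw [hcompl ⟨0,hn⟩ i]
      by_cases h : i = ⟨0, hn⟩
      · simp [h]
      · simp [h, Ne.symm h]
    | succ j ih =>
      intro i
      rw [pow_succ', ← Matrix.mulVec_mulVec]
      have hfun : (T ^ j).mulVec (fun i' => if i' = ⟨0, hn⟩ then (1:ℝ) else 0)
          = fun i' => ∑ k, q k * lam k ^ j * v k i' := funext ih
      rw [hfun]
      simp only [Matrix.mulVec, dotProduct]
      rw [show (∑ x, T i x * ∑ k, q k * lam k ^ j * v k x)
          = ∑ x, ∑ k, T i x * (q k * lam k ^ j * v k x) by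
        apply Finset.sum_congr rfl; intros; rw [Finset.mul_sum]]
      rw [Finset.sum_comm]
      apply Finset.sum_congr rfl
      intro k _
      have : ∑ m, T i m * (q k * lam k ^ j * v k m)
          = q k * lam k ^ j * ∑ m, T i m * v k m := by
        rw [Finset.mul_sum]; apply Finset.sum_congr rfl; intros; ring
      rw [this]
      have h2 : ∑ m, T i m * v k m = lam k * v k i := by
        have := congrFun (heig k) i
        simpa [Matrix.mulVec, dotProduct] using this
      rw [h2]; ring
  -- the Krylov matrix is upper triangular with known diagonal
  have htri : ∀ j : ℕ, ∀ i : Fin n,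
      (j < (i : ℕ) → ((T ^ j).mulVec (fun i' => if i' = ⟨0, hn⟩ then (1:ℝ) else 0)) i = 0)
      ∧ ((i : ℕ) = j → ((T ^ j).mulVec (fun i' => if i' = ⟨0, hn⟩ then (1:ℝ) else 0)) i
          = ∏ t ∈ range j, b t) := by
    intro j
    induction j with
    | zero =>
      intro i
      constructor
      · intro hi
        simp only [pow_zero, Matrix.one_mulVec]
        rw [if_neg]
        intro h; rw [h] at hi; simp at hi
      · intro hi
        have : i = ⟨0, hn⟩ := Fin.ext hi
        simp [this]
    | succ j ih =>
      intro i
      have hexp : ((T ^ (j+1)).mulVec (fun i' => if i' = ⟨0, hn⟩ then (1:ℝ) else 0)) i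
          = ∑ m, T i m * ((T ^ j).mulVec (fun i' => if i' = ⟨0, hn⟩ then (1:ℝ) else 0)) m := by
        rw [pow_succ', ← Matrix.mulVec_mulVec]
        simp [Matrix.mulVec, dotProduct]
      constructor
      · intro hi
        rw [hexp]
        apply Finset.sum_eq_zero
        intro m _
        by_cases hm : j < (m : ℕ)
        · rw [(ih m).1 hm, mul_zero]
        · have hTm : T i m = 0 := by
            rw [hT]
            rw [if_neg (by omega), if_neg (by omega), if_neg (by omega)]
          rw [hTm, zero_mul]
      · intro hi
        have hjn : j < n := by omega
        set m₀ : Fin n := ⟨j, hjn⟩ with hm₀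
        rw [hexp]
        rw [Finset.sum_eq_single m₀]
        · have hT0 : T i m₀ = b j := by
            rw [hT]
            rw [if_neg (by simp [hm₀]; omega), if_neg (by simp [hm₀]; omega),
              if_pos (by simp [hm₀]; omega)]
          rw [hT0, (ih m₀).2 rfl, prod_range_succ]
          ring
        · intro m _ hm
          have hmne : (m : ℕ) ≠ j := fun h => hm (Fin.ext (by simp [hm₀, h]))
          by_cases hmj : j < (m : ℕ)
          · rw [(ih m).1 hmj, mul_zero]
          · have hTm : T i m = 0 := by
              rw [hT]
              rw [if_neg (by omega), if_neg (by omega), if_neg (by omega)]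
            rw [hTm, zero_mul]
        · intro h; exact absurd (Finset.mem_univ m₀) h
  -- assemble the determinant identity
  set e1 : Fin n → ℝ := fun i' => if i' = ⟨0, hn⟩ then (1:ℝ) else 0 with he1
  set K : Matrix (Fin n) (Fin n) ℝ := Matrix.of (fun i j : Fin n => ((T ^ (j:ℕ)).mulVec e1) i)
    with hK
  set M : Matrix (Fin n) (Fin n) ℝ := Matrix.of (fun k j : Fin n => q k * lam k ^ (j:ℕ))
    with hM
  have hKQM : K = Q * M := by
    ext i j
    simp only [hK, hQdef, hM, Matrix.mul_apply, Matrix.of_apply]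
    rw [hkry (j:ℕ) i]
    apply Finset.sum_congr rfl; intros; ring
  have hdetK : K.det = ∏ i ∈ range (n-1), b i ^ (n-1-i) := by
    have htriK : K.BlockTriangular id := by
      intro i j hij
      exact (htri (j:ℕ) i).1 hij
    rw [Matrix.det_of_upperTriangular htriK]
    have : ∀ i : Fin n, K i i = ∏ t ∈ range (i:ℕ), b t := fun i => (htri (i:ℕ) i).2 rfl
    rw [Finset.prod_congr rfl (fun i _ => this i)]
    rw [Fin.prod_univ_eq_prod_range (fun j => ∏ t ∈ range j, b t) n]
    exact prodprod_aux b n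
  have hdetM : M.det = (∏ k, q k) * ∏ i : Fin n, ∏ j ∈ Ioi i, (lam j - lam i) := by
    have : M = Matrix.diagonal q * Matrix.vandermonde lam := by
      ext k j
      simp [hM, Matrix.mul_apply, Matrix.diagonal, Matrix.vandermonde]
    rw [this, Matrix.det_mul, Matrix.det_diagonal, Matrix.det_vandermonde]
  have hdetQ : Q.det * Q.det = 1 := by
    have := congrArg Matrix.det hQtQ
    rwa [Matrix.det_mul, Matrix.det_transpose, Matrix.det_one] at this
  have hsq : (K.det)^2 = (∏ k, q k)^2 * (∏ i : Fin n, ∏ j ∈ Ioi i, (lam j - lam i))^2 := by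
    rw [hKQM, Matrix.det_mul, hdetM]
    ring_nf
    rw [show Q.det ^ 2 = 1 by rw [sq]; exact hdetQ]
    ring
  have hL : (K.det)^2 = ∏ i ∈ range (n-1), b i ^ (2*(n-1-i)) := by
    rw [hdetK, ← Finset.prod_pow]
    apply Finset.prod_congr rfl
    intros i _
    rw [← pow_mul, Nat.mul_comm]
  have hV : (∏ i : Fin n, ∏ j ∈ Ioi i, (lam j - lam i))^2
      = ∏ i : Fin n, ∏ j ∈ Ioi i, (lam i - lam j)^2 := by
    rw [← Finset.prod_pow]
    apply Finset.prod_congr rfl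
    intro i _
    rw [← Finset.prod_pow]
    apply Finset.prod_congr rfl
    intro j _
    rw [← neg_sub (lam i) (lam j), neg_sq]
  have hqprod : (∏ k, q k)^2 = ∏ k, q k ^ 2 := by rw [← Finset.prod_pow]
  have hqne : (∏ k, q k ^ 2) ≠ 0 := by
    apply Finset.prod_ne_zero_iff.mpr
    intro k _
    exact pow_ne_zero 2 (hq k).ne'
  rw [eq_div_iff hqne]
  rw [← hL, hsq, hV, hqprod]
  ring
end

section
/- For the unitary Hessenberg matrix H(α₀,…,α_{n-1}) with |α_j| < 1 for j < n-1 and |α_{n-1}| ≤ 1, having eigenvalues λ₁,…,λₙ on the unit circle and q_j the modulus of the first component of the j-th normalized eigenvector, one has ∏_{1≤i<j≤n} |λ_i - λ_j|² = ∏_{l=0}^{n-2} (1 - |α_l|²)^{n-1-l} / ∏_{j=1}^n q_j². -/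
open Finset Matrix

/-- The unitary upper Hessenberg matrix parametrized by the Verblunsky
coefficients `α 0, …, α (n-1)`, with `α₋₁ = -1` and
`ρ j = √(1 - |α j|²)`:  `H i i = -α_{i-1} conj(α i)`, `H (i+1) i = ρ i`,
`H i j = -α_{i-1} conj(α j) ∏_{l=i}^{j-1} ρ l` for `i < j`, and `0` below the
subdiagonal. -/
noncomputable def hessenbergU (n : ℕ) (α : ℕ → ℂ) : Matrix (Fin n) (Fin n) ℂ :=
  let A : ℕ → ℂ := fun i => if i = 0 then -1 else α (i - 1)
  let ρ : ℕ → ℂ := fun j => (Real.sqrt (1 - ‖α j‖ ^ 2) : ℝ)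
  Matrix.of fun i j =>
    if (i : ℕ) = (j : ℕ) then -A i * starRingEnd ℂ (α i)
    else if (j : ℕ) + 1 = (i : ℕ) then ρ j
    else if (i : ℕ) < (j : ℕ) then
      -A i * starRingEnd ℂ (α j) * ∏ l ∈ Ico (i : ℕ) (j : ℕ), ρ l
    else 0

namespace HessAux

noncomputable def Av (α : ℕ → ℂ) (i : ℕ) : ℂ := if i = 0 then -1 else α (i - 1)

noncomputable def rho (α : ℕ → ℂ) (j : ℕ) : ℝ := Real.sqrt (1 - ‖α j‖ ^ 2)

/-- ℕ-indexed version of the entries. -/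
noncomputable def G (α : ℕ → ℂ) (i j : ℕ) : ℂ :=
  if j + 1 = i then (rho α j : ℂ)
  else if i ≤ j then -Av α i * starRingEnd ℂ (α j) * ∏ l ∈ Ico i j, (rho α l : ℂ)
  else 0

lemma hess_eq_G (n : ℕ) (α : ℕ → ℂ) (i j : Fin n) :
    hessenbergU n α i j = G α i j := by
  simp only [hessenbergU, Matrix.of_apply, G, Av, rho]
  rcases lt_trichotomy (i : ℕ) (j : ℕ) with h | h | h
  · rw [if_neg (show ¬(i:ℕ) = j by omega), if_neg (show ¬(j:ℕ)+1 = i by omega),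
      if_pos h, if_pos (le_of_lt h), if_neg (show ¬(j:ℕ)+1 = i by omega)]
  · rw [if_pos h, if_neg (show ¬(j:ℕ)+1 = i by omega), if_pos (le_of_eq h), h,
      Ico_self, prod_empty, mul_one]
  · rcases eq_or_lt_of_le (Nat.succ_le_of_lt h) with h2 | h2
    · rw [if_neg (show ¬(i:ℕ) = j by omega), if_pos h2, if_pos h2]
    · rw [if_neg (show ¬(i:ℕ) = j by omega), if_neg (show ¬(j:ℕ)+1 = i by omega),
        if_neg (show ¬(i:ℕ) < j by omega), if_neg (show ¬(j:ℕ)+1 = i by omega),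
        if_neg (show ¬(i:ℕ) ≤ j by omega)]

lemma G_eq_zero (α : ℕ → ℂ) {i j : ℕ} (h : j + 1 < i) : G α i j = 0 := by
  rw [G, if_neg (by omega), if_neg (by omega)]

lemma G_sub (α : ℕ → ℂ) {i j : ℕ} (h : j + 1 = i) : G α i j = (rho α j : ℂ) := by
  rw [G, if_pos h]

lemma G_le (α : ℕ → ℂ) {i j : ℕ} (h : i ≤ j) :
    G α i j = -Av α i * starRingEnd ℂ (α j) * ∏ l ∈ Ico i j, (rho α l : ℂ) := by
  rw [G, if_neg (by omega), if_pos h]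

end HessAux

namespace HessAux

lemma abs_Av (α : ℕ → ℂ) (i : ℕ) :
    ‖Av α i‖ = if i = 0 then 1 else ‖α (i-1)‖ := by
  rcases eq_or_ne i 0 with h | h <;> simp [Av, h]

lemma rho_sq (α : ℕ → ℂ) {l : ℕ} (h : ‖α l‖ ≤ 1) :
    (rho α l)^2 = 1 - ‖α l‖^2 := by
  have h0 : (0:ℝ) ≤ ‖α l‖ := norm_nonneg _
  rw [rho, Real.sq_sqrt (by nlinarith)]

lemma S_eq_one (α : ℕ → ℂ) (j : ℕ) :
    ∑ i ∈ range (j+1), (‖Av α i‖)^2 *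
      ∏ l ∈ Ico i j, (1 - ‖α l‖^2) = 1 := by
  induction j with
  | zero => simp [abs_Av]
  | succ j ih =>
    rw [Finset.sum_range_succ]
    have h1 : ∀ i ∈ range (j+1), (‖Av α i‖)^2 *
        ∏ l ∈ Ico i (j+1), (1 - ‖α l‖^2)
        = ((‖Av α i‖)^2 * ∏ l ∈ Ico i j, (1 - ‖α l‖^2))
          * (1 - ‖α j‖^2) := by
      intro i hi
      rw [Finset.prod_Ico_succ_top (by exact (Nat.lt_succ_iff.mp (mem_range.mp hi)))]
      ring
    rw [Finset.sum_congr rfl h1, ← Finset.sum_mul, ih, one_mul, Ico_self, prod_empty,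
      mul_one, abs_Av]
    simp

end HessAux

namespace HessAux

lemma G_inner (α : ℕ → ℂ) (n : ℕ) (hle : ∀ l, l < n → ‖α l‖ ≤ 1)
    (hlast : ‖α (n-1)‖ = 1)
    {j j' : ℕ} (hj : j < n) (hj' : j' < n) (hjj : j ≤ j') :
    ∑ i ∈ range n, starRingEnd ℂ (G α i j) * G α i j' = if j = j' then 1 else 0 := by
  have hprodsq : ∀ a b : ℕ, b ≤ n - 1 →
      (∏ l ∈ Ico a b, ((rho α l : ℝ) : ℂ)) * (∏ l ∈ Ico a b, ((rho α l : ℝ) : ℂ))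
        = ((∏ l ∈ Ico a b, (1 - ‖α l‖^2) : ℝ) : ℂ) := by
    intro a b hb
    push_cast
    rw [← Finset.prod_mul_distrib]
    refine Finset.prod_congr rfl fun l hl => ?_
    rw [← Complex.ofReal_mul, ← sq, rho_sq α (hle l (by have := (mem_Ico.mp hl).2; omega))]
    push_cast; ring
  have hAv : ∀ i : ℕ, starRingEnd ℂ (Av α i) * Av α i
      = (((‖Av α i‖)^2 : ℝ) : ℂ) := by
    intro i
    rw [Complex.sq_norm, Complex.normSq_eq_conj_mul_self]
  have key : ∀ i, i ≤ j → starRingEnd ℂ (G α i j) * G α i j'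
      = α j * starRingEnd ℂ (α j') * (∏ l ∈ Ico j j', ((rho α l : ℝ) : ℂ)) *
        (((‖Av α i‖)^2 * ∏ l ∈ Ico i j, (1 - ‖α l‖^2) : ℝ) : ℂ) := by
    intro i hi
    rw [G_le α hi, G_le α (le_trans hi hjj), ← Finset.prod_Ico_consecutive
      (fun l => ((rho α l : ℝ) : ℂ)) hi hjj]
    have : starRingEnd ℂ (-Av α i * starRingEnd ℂ (α j) * ∏ l ∈ Ico i j, ((rho α l : ℝ) : ℂ))
        = -starRingEnd ℂ (Av α i) * α j * ∏ l ∈ Ico i j, ((rho α l : ℝ) : ℂ) := by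
      simp [map_prod, Complex.conj_ofReal]
    rw [this, show (-starRingEnd ℂ (Av α i) * α j * ∏ l ∈ Ico i j, ((rho α l : ℝ) : ℂ)) *
        (-Av α i * starRingEnd ℂ (α j') *
          ((∏ l ∈ Ico i j, ((rho α l : ℝ) : ℂ)) * ∏ l ∈ Ico j j', ((rho α l : ℝ) : ℂ)))
        = (starRingEnd ℂ (Av α i) * Av α i) *
          ((∏ l ∈ Ico i j, ((rho α l : ℝ) : ℂ)) * ∏ l ∈ Ico i j, ((rho α l : ℝ) : ℂ)) *
          (α j * starRingEnd ℂ (α j') * ∏ l ∈ Ico j j', ((rho α l : ℝ) : ℂ)) from by ring,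
      hAv, hprodsq i j (by omega)]
    push_cast; ring
  rw [range_eq_Ico, ← Finset.sum_Ico_consecutive
    (fun i => starRingEnd ℂ (G α i j) * G α i j') (Nat.zero_le (j+1)) (by omega)]
  have h2 : ∑ i ∈ Ico (j+1) n, starRingEnd ℂ (G α i j) * G α i j'
      = starRingEnd ℂ (G α (j+1) j) * G α (j+1) j' := by
    refine Finset.sum_eq_single (j+1) (fun b hb hne => ?_) (fun hnm => ?_)
    · rw [G_eq_zero α (by have := (mem_Ico.mp hb).1; omega), map_zero, zero_mul]
    · have hjn : j = n - 1 := by simp only [mem_Ico] at hnm; omega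
      have : rho α j = 0 := by
        rw [rho, hjn, hlast]; simp
      rw [G_sub α rfl, this, Complex.ofReal_zero, map_zero, zero_mul]
  rw [h2, ← range_eq_Ico, Finset.sum_congr rfl (fun i hi => key i (Nat.lt_succ_iff.mp
    (mem_range.mp hi))), ← Finset.mul_sum, ← Complex.ofReal_sum, S_eq_one α j,
    Complex.ofReal_one, mul_one]
  rcases eq_or_lt_of_le hjj with h | h
  · subst h
    rw [if_pos rfl, Ico_self, prod_empty, mul_one, G_sub α rfl, Complex.conj_ofReal,
      ← Complex.ofReal_mul, ← sq, rho_sq α (hle j hj), Complex.mul_conj, Complex.sq_norm]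
    push_cast; ring
  · rw [if_neg (by omega), G_sub α rfl, G_le α (by omega : j + 1 ≤ j'),
      Finset.prod_eq_prod_Ico_succ_bot h, Complex.conj_ofReal]
    have : Av α (j+1) = α j := by rw [Av, if_neg (by omega)]; norm_num
    rw [this]
    ring

end HessAux

namespace HessAux

lemma G_inner' (α : ℕ → ℂ) (n : ℕ) (hle : ∀ l, l < n → ‖α l‖ ≤ 1)
    (hlast : ‖α (n-1)‖ = 1)
    {j j' : ℕ} (hj : j < n) (hj' : j' < n) :
    ∑ i ∈ range n, starRingEnd ℂ (G α i j) * G α i j' = if j = j' then 1 else 0 := by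
  rcases le_total j j' with h | h
  · exact G_inner α n hle hlast hj hj' h
  · have h1 : ∑ i ∈ range n, starRingEnd ℂ (G α i j) * G α i j'
        = starRingEnd ℂ (∑ i ∈ range n, starRingEnd ℂ (G α i j') * G α i j) := by
      rw [map_sum]
      exact Finset.sum_congr rfl fun i _ => by
        rw [_root_.map_mul, Complex.conj_conj, mul_comm]
    rw [h1, G_inner α n hle hlast hj' hj h]
    rcases eq_or_ne j j' with he | he
    · simp [he]
    · rw [if_neg (Ne.symm he), if_neg he, map_zero]

lemma hess_unitary (n : ℕ) (α : ℕ → ℂ)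
    (hle : ∀ l, l < n → ‖α l‖ ≤ 1)
    (hlast : ‖α (n-1)‖ = 1) :
    (hessenbergU n α)ᴴ * hessenbergU n α = 1 := by
  ext j j'
  rw [Matrix.mul_apply, Matrix.one_apply]
  simp only [Matrix.conjTranspose_apply, hess_eq_G]
  have : ∑ i : Fin n, star (G α (i : ℕ) (j : ℕ)) * G α (i : ℕ) (j' : ℕ)
      = ∑ i ∈ range n, starRingEnd ℂ (G α i j) * G α i j' := by
    rw [← Fin.sum_univ_eq_sum_range (fun i => starRingEnd ℂ (G α i j) * G α i j') n]
    rfl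
  rw [this, G_inner' α n hle hlast j.isLt j'.isLt]
  rcases eq_or_ne j j' with he | he
  · simp [he]
  · rw [if_neg (fun hc => he (Fin.ext hc)), if_neg he]

end HessAux

namespace HessAux

lemma pow_col (n : ℕ) (hn : 0 < n) (α : ℕ → ℂ) (m : ℕ) :
    ∀ i : Fin n, ((m < (i:ℕ) → (hessenbergU n α ^ m) i ⟨0,hn⟩ = 0) ∧
      ((i:ℕ) = m → (hessenbergU n α ^ m) i ⟨0,hn⟩
        = ((∏ l ∈ range m, rho α l : ℝ) : ℂ))) := by
  induction m with
  | zero =>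
    intro i
    constructor
    · intro hi
      rw [pow_zero, Matrix.one_apply, if_neg (by intro hc; rw [hc] at hi; simp at hi)]
    · intro hi
      rw [pow_zero, Matrix.one_apply, if_pos (by exact Fin.ext hi)]
      simp
  | succ m ih =>
    intro i
    rw [pow_succ', Matrix.mul_apply]
    constructor
    · intro hi
      refine Finset.sum_eq_zero fun j _ => ?_
      rcases le_or_gt (j : ℕ) m with hj | hj
      · rw [hess_eq_G, G_eq_zero α (by omega), zero_mul]
      · rw [(ih j).1 hj, mul_zero]
    · intro hi
      have hm : m < n := by omega
      rw [Finset.sum_eq_single (⟨m, hm⟩ : Fin n)]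
      · rw [hess_eq_G, (ih ⟨m, hm⟩).2 rfl]
        have : G α (i : ℕ) m = ((rho α m : ℝ) : ℂ) := G_sub α (by omega)
        rw [this, prod_range_succ]
        push_cast; ring
      · intro j _ hj
        have hj' : (j : ℕ) ≠ m := fun hc => hj (Fin.ext hc)
        rcases le_or_gt (j : ℕ) m with h | h
        · rw [hess_eq_G, G_eq_zero α (by omega), zero_mul]
        · rw [(ih j).1 h, mul_zero]
      · intro h
        exact absurd (mem_univ _) h

end HessAux

namespace HessAux

lemma rho_nonneg (α : ℕ → ℂ) (j : ℕ) : 0 ≤ rho α j := Real.sqrt_nonneg _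

lemma conj_mul_self (z : ℂ) : starRingEnd ℂ z * z = ((‖z‖ ^ 2 : ℝ) : ℂ) := by
  rw [Complex.sq_norm, Complex.normSq_eq_conj_mul_self]

lemma prod_prod {M : Type*} [CommMonoid M] (f : ℕ → M) (N : ℕ) :
    ∏ m ∈ range N, ∏ l ∈ range m, f l = ∏ l ∈ range N, f l ^ (N - 1 - l) := by
  induction N with
  | zero => simp
  | succ N ih =>
    rw [prod_range_succ, ih, prod_range_succ, Nat.succ_sub_one, Nat.sub_self, pow_zero,
      mul_one, ← Finset.prod_mul_distrib]
    refine Finset.prod_congr rfl fun l hl => ?_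
    rw [← pow_succ]
    congr 1
    have := mem_range.mp hl
    omega

end HessAux

open HessAux

/-- For the unitary Hessenberg matrix `H(α₀,…,α_{n-1})` with eigenvalues
`λ₁,…,λₙ` on the unit circle and `q_j > 0` the modulus of the first component
of the `j`-th normalized eigenvector, one has
`∏_{i<j} |λ_i - λ_j|² = ∏_{l=0}^{n-2} (1-|α_l|²)^{n-1-l} / ∏ q_j²`. -/
theorem stmt_8 (n : ℕ) (hn : 0 < n) (α : ℕ → ℂ)
    (hα : ∀ j, j < n - 1 → ‖α j‖ < 1)
    (hlast : ‖α (n - 1)‖ = 1)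
    (lam : Fin n → ℂ) (hmod : ∀ j, ‖lam j‖ = 1)
    (hdist : Function.Injective lam)
    (q : Fin n → ℝ) (hq : ∀ j, 0 < q j) (hq1 : ∑ j, q j ^ 2 = 1)
    (hev : ∀ k, ∃ v : Fin n → ℂ,
      (∑ i, ‖v i‖ ^ 2 = 1) ∧
      (hessenbergU n α).mulVec v = lam k • v ∧
      ‖v ⟨0, hn⟩‖ = q k) :
    ∏ i, ∏ j ∈ Ioi i, ‖lam i - lam j‖ ^ 2
      = (∏ l ∈ range (n - 1), (1 - ‖α l‖ ^ 2) ^ (n - 1 - l)) /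
          ∏ j, q j ^ 2 := by
  classical
  set H := hessenbergU n α with hHdef
  have hle : ∀ l, l < n → ‖α l‖ ≤ 1 := by
    intro l hl
    rcases lt_or_ge l (n-1) with h | h
    · exact le_of_lt (hα l h)
    · have : l = n - 1 := by omega
      rw [this, hlast]
  have hU : Hᴴ * H = 1 := hess_unitary n α hle hlast
  choose v hv1 hv2 hv3 using hev
  set e0 : Fin n := ⟨0, hn⟩ with he0
  set V : Matrix (Fin n) (Fin n) ℂ := Matrix.of fun i k => v k i with hV
  have hVapp : ∀ i k, V i k = v k i := fun i k => rfl
  have hVHapp : ∀ k i, Vᴴ k i = starRingEnd ℂ (v k i) := fun k i => rfl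
  -- orthonormality of eigenvectors
  have horth : Vᴴ * V = 1 := by
    ext k k'
    rw [Matrix.mul_apply, Matrix.one_apply]
    have hsum : ∑ i, Vᴴ k i * V i k' = ∑ i, starRingEnd ℂ (v k i) * v k' i := by
      refine Finset.sum_congr rfl fun i _ => ?_
      rw [hVapp, hVHapp]
    rcases eq_or_ne k k' with rfl | hne
    · rw [if_pos rfl, hsum]
      have : ∀ i : Fin n, starRingEnd ℂ (v k i) * v k i
          = ((‖v k i‖ ^ 2 : ℝ) : ℂ) := fun i => conj_mul_self _
      rw [Finset.sum_congr rfl fun i _ => this i, ← Complex.ofReal_sum, hv1 k,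
        Complex.ofReal_one]
    · rw [if_neg hne, hsum]
      have hdot : star (v k) ⬝ᵥ v k' = ∑ i, starRingEnd ℂ (v k i) * v k' i := rfl
      have key : star (H.mulVec (v k)) ⬝ᵥ H.mulVec (v k') = star (v k) ⬝ᵥ v k' := by
        rw [Matrix.star_mulVec, dotProduct_mulVec, Matrix.vecMul_vecMul, hU,
          Matrix.vecMul_one]
      rw [hv2 k, hv2 k'] at key
      have hcalc : star (lam k • v k) ⬝ᵥ (lam k' • v k')
          = (starRingEnd ℂ (lam k) * lam k') * (star (v k) ⬝ᵥ v k') := by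
        rw [star_smul, smul_dotProduct, dotProduct_smul]
        simp only [smul_eq_mul, starRingEnd_apply]
        ring
      have key2 : (starRingEnd ℂ (lam k) * lam k') * (star (v k) ⬝ᵥ v k')
          = star (v k) ⬝ᵥ v k' := by rw [← hcalc]; exact key
      have hne1 : starRingEnd ℂ (lam k) * lam k' ≠ 1 := by
        intro hc
        have h1 : lam k * (starRingEnd ℂ (lam k) * lam k') = lam k := by rw [hc, mul_one]
        rw [← mul_assoc, Complex.mul_conj] at h1
        have h2 : Complex.normSq (lam k) = 1 := by
          rw [← Complex.sq_norm, hmod k, one_pow]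
        rw [h2, Complex.ofReal_one, one_mul] at h1
        exact hne (hdist h1.symm)
      have hz : (starRingEnd ℂ (lam k) * lam k' - 1) * (star (v k) ⬝ᵥ v k') = 0 := by
        rw [sub_mul, one_mul, key2, sub_self]
      rcases mul_eq_zero.mp hz with h | h
      · exact absurd (by linear_combination h) hne1
      · rw [← hdot, h]
  have hVV : V * Vᴴ = 1 := mul_eq_one_comm.mp horth
  have hdetV : ‖V.det‖ = 1 := by
    have h1 : V.det * starRingEnd ℂ V.det = 1 := by
      have := congrArg Matrix.det hVV
      rw [Matrix.det_mul, Matrix.det_one, Matrix.det_conjTranspose] at this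
      exact this
    rw [Complex.mul_conj] at h1
    have h3 : ‖V.det‖ ^ 2 = 1 := by
      rw [Complex.sq_norm]
      exact_mod_cast h1
    nlinarith [norm_nonneg V.det]
  have hHV : H * V = V * Matrix.diagonal lam := by
    ext i k
    rw [Matrix.mul_apply, Matrix.mul_diagonal]
    have hrow : ∑ j, H i j * V j k = H.mulVec (v k) i := rfl
    rw [hrow, hv2 k, hVapp]
    simp only [Pi.smul_apply, smul_eq_mul]
    ring
  have hHpow : ∀ m : ℕ, H ^ m = V * Matrix.diagonal (fun k => lam k ^ m) * Vᴴ := by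
    intro m
    induction m with
    | zero =>
      simp only [pow_zero]
      rw [show (Matrix.diagonal fun _ : Fin n => (1:ℂ)) = 1 from Matrix.diagonal_one,
        Matrix.mul_one, hVV]
    | succ m ih =>
      rw [pow_succ', ih, ← Matrix.mul_assoc, ← Matrix.mul_assoc, hHV]
      rw [Matrix.mul_assoc V (Matrix.diagonal lam), Matrix.diagonal_mul_diagonal,
        show (fun i => lam i * lam i ^ m) = fun k => lam k ^ (m+1) from
          funext fun k => by ring]
  set W : Matrix (Fin n) (Fin n) ℂ := Matrix.of fun i m => (H ^ (m : ℕ)) i e0 with hW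
  have hWapp : ∀ i m, W i m = (H ^ (m : ℕ)) i e0 := fun i m => rfl
  have hWfact : W = V * (Matrix.diagonal (fun k => starRingEnd ℂ (v k e0)) *
      Matrix.vandermonde lam) := by
    ext i m
    rw [Matrix.mul_apply, hWapp, hHpow (m : ℕ), Matrix.mul_apply]
    refine Finset.sum_congr rfl fun k _ => ?_
    rw [Matrix.mul_diagonal, Matrix.diagonal_mul, Matrix.vandermonde_apply, hVHapp, hVapp]
    ring
  have hdetW : ‖W.det‖
      = (∏ k, q k) * ∏ i, ∏ j ∈ Ioi i, ‖lam j - lam i‖ := by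
    rw [hWfact, Matrix.det_mul, Matrix.det_mul, Matrix.det_diagonal, Matrix.det_vandermonde,
      norm_mul, norm_mul, hdetV, one_mul, norm_prod, norm_prod]
    congr 1
    · exact Finset.prod_congr rfl fun k _ => by rw [Complex.norm_conj, hv3]
    · exact Finset.prod_congr rfl fun i _ => norm_prod _ _
  have htri : W.BlockTriangular id := by
    intro i m h
    exact (pow_col n hn α (m : ℕ) i).1 h
  have hdetW2 : W.det = ((∏ l ∈ range n, rho α l ^ (n - 1 - l) : ℝ) : ℂ) := by
    have hdiag : ∀ m : Fin n, W m m = ((∏ l ∈ range (m : ℕ), rho α l : ℝ) : ℂ) :=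
      fun m => (pow_col n hn α (m : ℕ) m).2 rfl
    rw [Matrix.det_of_upperTriangular htri,
      Finset.prod_congr rfl fun m _ => hdiag m, ← Complex.ofReal_prod]
    rw [show (∏ m : Fin n, (∏ l ∈ range (m : ℕ), rho α l))
        = ∏ m ∈ range n, ∏ l ∈ range m, rho α l from
      Fin.prod_univ_eq_prod_range (fun m => ∏ l ∈ range m, rho α l) n, prod_prod]
  have habsW : ‖W.det‖ = ∏ l ∈ range n, rho α l ^ (n - 1 - l) := by
    rw [hdetW2, Complex.norm_real, Real.norm_of_nonneg]
    exact Finset.prod_nonneg fun l _ => pow_nonneg (rho_nonneg α l) _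
  set P := ∏ i, ∏ j ∈ Ioi i, ‖lam j - lam i‖ with hPdef
  have hkey : (∏ k, q k) * P = ∏ l ∈ range n, rho α l ^ (n - 1 - l) := by
    rw [← hdetW, habsW]
  have hR2 : (∏ l ∈ range n, rho α l ^ (n - 1 - l)) ^ 2
      = ∏ l ∈ range (n - 1), (1 - ‖α l‖ ^ 2) ^ (n - 1 - l) := by
    rw [← Finset.prod_pow]
    have step : ∀ l ∈ range n, (rho α l ^ (n - 1 - l)) ^ 2
        = (1 - ‖α l‖ ^ 2) ^ (n - 1 - l) := by
      intro l hl
      rw [← pow_mul, mul_comm (n - 1 - l) 2, pow_mul, rho_sq α (hle l (mem_range.mp hl))]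
    rw [Finset.prod_congr rfl step]
    have hsplit : ∏ l ∈ range n, (1 - ‖α l‖ ^ 2) ^ (n - 1 - l)
        = (∏ l ∈ range (n - 1), (1 - ‖α l‖ ^ 2) ^ (n - 1 - l)) *
          (1 - ‖α (n - 1)‖ ^ 2) ^ (n - 1 - (n - 1)) := by
      conv_lhs => rw [show n = (n - 1) + 1 by omega]
      exact prod_range_succ _ (n - 1)
    rw [hsplit, Nat.sub_self, pow_zero, mul_one]
  have e1 : (∏ i, ∏ j ∈ Ioi i, ‖lam i - lam j‖ ^ 2) = P ^ 2 := by
    rw [hPdef, ← Finset.prod_pow]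
    refine Finset.prod_congr rfl fun i _ => ?_
    rw [← Finset.prod_pow]
    exact Finset.prod_congr rfl fun j _ => by rw [norm_sub_rev]
  have e2 : (∏ j, q j ^ 2) = (∏ j, q j) ^ 2 := Finset.prod_pow _ _ _
  have hqpos : (0:ℝ) < ∏ j, q j := Finset.prod_pos fun j _ => hq j
  rw [e1, e2, eq_div_iff (pow_ne_zero _ (ne_of_gt hqpos))]
  calc P ^ 2 * (∏ j, q j) ^ 2 = ((∏ j, q j) * P) ^ 2 := by ring
    _ = (∏ l ∈ range n, rho α l ^ (n - 1 - l)) ^ 2 := by rw [hkey]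
    _ = _ := hR2
end

section
/- Characteristic polynomials χ_k(λ) of the leading k×k principal submatrices of the unitary Hessenberg matrix H(α₀,…,α_{n-1}) satisfy the Szegő-type coupled recurrence χ_k(λ) = λ χ_{k-1}(λ) - conj(α_{k-1}) χ̃_{k-1}(λ) and χ̃_k(λ) = χ̃_{k-1}(λ) - λ α_{k-1} χ_{k-1}(λ), with χ₀ = χ̃₀ = 1, where χ̃_k(λ) = λ^k conj(χ_k)(1/λ) (the reversed conjugate polynomial). -/
open Finset

/-- Entry function of the unitary upper Hessenberg matrix parametrized by
Verblunsky coefficients `α`, with `α₋₁ = -1`, `ρ j = √(1-|α j|²)`. -/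
noncomputable def hessEntry (α : ℕ → ℂ) (i j : ℕ) : ℂ :=
  let A : ℕ → ℂ := fun i => if i = 0 then -1 else α (i - 1)
  let ρ : ℕ → ℂ := fun j => (Real.sqrt (1 - ‖α j‖ ^ 2) : ℝ)
  if i = j then -A i * starRingEnd ℂ (α i)
  else if j + 1 = i then ρ j
  else if i < j then -A i * starRingEnd ℂ (α j) * ∏ l ∈ Ico i j, ρ l
  else 0

/-- Characteristic polynomial `χ_k(λ) = det(λ I_k - H_k)` of the top-left
`k×k` block of the Hessenberg matrix. -/
noncomputable def hessChar (α : ℕ → ℂ) (k : ℕ) (lam : ℂ) : ℂ :=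
  (lam • (1 : Matrix (Fin k) (Fin k) ℂ)
    - Matrix.of fun i j : Fin k => hessEntry α i j).det

/-- The reversed conjugate polynomial `χ̃_k(λ) = λ^k conj(χ_k)(1/λ)`, where
`conj(χ_k)` is the polynomial with conjugated coefficients, i.e.
`χ̃_k(λ) = λ^k · conj (χ_k ((conj λ)⁻¹))` for `λ ≠ 0`. -/
noncomputable def hessCharTilde (α : ℕ → ℂ) (k : ℕ) (lam : ℂ) : ℂ :=
  lam ^ k * starRingEnd ℂ (hessChar α k ((starRingEnd ℂ lam)⁻¹))

namespace SzegoAux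

noncomputable def Av (α : ℕ → ℂ) : ℕ → ℂ := fun i => if i = 0 then -1 else α (i - 1)
noncomputable def ρv (α : ℕ → ℂ) : ℕ → ℂ :=
  fun j => ((Real.sqrt (1 - ‖α j‖ ^ 2) : ℝ) : ℂ)

noncomputable def Mfun (α : ℕ → ℂ) (lam : ℂ) (i j : ℕ) : ℂ :=
  (if i = j then lam else 0) - hessEntry α i j
noncomputable def Nfun (α : ℕ → ℂ) (lam : ℂ) (i j : ℕ) : ℂ :=
  (if i = j then 1 else 0) - lam * starRingEnd ℂ (hessEntry α i j)

noncomputable def Mmat (α : ℕ → ℂ) (lam : ℂ) (k : ℕ) : Matrix (Fin k) (Fin k) ℂ :=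
  Matrix.of fun i j => Mfun α lam i j
noncomputable def Nmat (α : ℕ → ℂ) (lam : ℂ) (k : ℕ) : Matrix (Fin k) (Fin k) ℂ :=
  Matrix.of fun i j => Nfun α lam i j

noncomputable def uv (α : ℕ → ℂ) (k i : ℕ) : ℂ := Av α i * ∏ l ∈ Ico i k, ρv α l

noncomputable def χf (α : ℕ → ℂ) (lam : ℂ) (k : ℕ) : ℂ := (Mmat α lam k).det
noncomputable def Tf (α : ℕ → ℂ) (lam : ℂ) (k : ℕ) : ℂ := (Nmat α lam k).det
noncomputable def Gf (α : ℕ → ℂ) (lam : ℂ) (k : ℕ) : ℂ :=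
  ((Mmat α lam (k+1)).updateCol (Fin.last k) (fun i => uv α k i)).det
noncomputable def Ff (α : ℕ → ℂ) (lam : ℂ) (k : ℕ) : ℂ :=
  ((Nmat α lam (k+1)).updateCol (Fin.last k) (fun i => starRingEnd ℂ (uv α k i))).det

variable (α : ℕ → ℂ) (lam : ℂ)

lemma hessEntry_eq (i j : ℕ) : hessEntry α i j =
    if i = j then -Av α i * starRingEnd ℂ (α i)
    else if j + 1 = i then ρv α j
    else if i < j then -Av α i * starRingEnd ℂ (α j) * ∏ l ∈ Ico i j, ρv α l
    else 0 := rfl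

lemma hessEntry_lt {i j : ℕ} (h : i < j) :
    hessEntry α i j = -Av α i * starRingEnd ℂ (α j) * ∏ l ∈ Ico i j, ρv α l := by
  rw [hessEntry_eq]
  rw [if_neg (by omega), if_neg (by omega), if_pos h]

lemma hessEntry_diag (i : ℕ) :
    hessEntry α i i = -Av α i * starRingEnd ℂ (α i) := by
  rw [hessEntry_eq, if_pos rfl]

lemma hessEntry_sub (j : ℕ) : hessEntry α (j+1) j = ρv α j := by
  rw [hessEntry_eq, if_neg (by omega), if_pos rfl]

lemma hessEntry_low {i j : ℕ} (h : j + 1 < i) : hessEntry α i j = 0 := by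
  rw [hessEntry_eq, if_neg (by omega), if_neg (by omega), if_neg (by omega)]

lemma Mfun_col {i k : ℕ} (h : i < k) :
    Mfun α lam i k = starRingEnd ℂ (α k) * uv α k i := by
  rw [Mfun, hessEntry_lt α h, if_neg (by omega), uv]; ring

lemma Mfun_diag (k : ℕ) :
    Mfun α lam k k = lam + starRingEnd ℂ (α k) * uv α k k := by
  rw [Mfun, hessEntry_diag, if_pos rfl, uv, Ico_self, prod_empty]; ring

lemma Mfun_sub (j : ℕ) : Mfun α lam (j+1) j = -ρv α j := by
  rw [Mfun, hessEntry_sub, if_neg (by omega), zero_sub]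

lemma Mfun_low {i j : ℕ} (h : j + 1 < i) : Mfun α lam i j = 0 := by
  rw [Mfun, hessEntry_low α h, if_neg (by omega), sub_zero]

lemma conj_ρv (j : ℕ) : starRingEnd ℂ (ρv α j) = ρv α j := Complex.conj_ofReal _

lemma Nfun_col {i k : ℕ} (h : i < k) :
    Nfun α lam i k = lam * α k * starRingEnd ℂ (uv α k i) := by
  rw [Nfun, hessEntry_lt α h, if_neg (by omega), uv]
  simp only [map_mul, map_neg, map_prod, conj_ρv, Complex.conj_conj]
  ring

lemma Nfun_diag (k : ℕ) :
    Nfun α lam k k = 1 + lam * α k * starRingEnd ℂ (uv α k k) := by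
  rw [Nfun, hessEntry_diag, if_pos rfl, uv, Ico_self, prod_empty]
  simp only [map_mul, map_neg, map_one, Complex.conj_conj, mul_one]
  ring

lemma Nfun_sub (j : ℕ) : Nfun α lam (j+1) j = -(lam * ρv α j) := by
  rw [Nfun, hessEntry_sub, if_neg (by omega), conj_ρv, zero_sub]

lemma Nfun_low {i j : ℕ} (h : j + 1 < i) : Nfun α lam i j = 0 := by
  rw [Nfun, hessEntry_low α h, if_neg (by omega)]; simp

lemma uv_self (k : ℕ) : uv α k k = Av α k := by
  rw [uv, Ico_self, prod_empty, mul_one]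

lemma uv_succ {k i : ℕ} (h : i ≤ k) : uv α (k+1) i = ρv α k * uv α k i := by
  rw [uv, uv, prod_Ico_succ_top h]; ring

lemma χf_eq_hessChar (k : ℕ) : χf α lam k = hessChar α k lam := by
  unfold χf hessChar Mmat
  congr 1
  ext i j
  simp only [Matrix.sub_apply, Matrix.smul_apply, Matrix.one_apply, Matrix.of_apply, Mfun,
    smul_eq_mul, mul_ite, mul_one, mul_zero, Fin.ext_iff]

lemma val_succAbove {n : ℕ} (p : Fin (n+1)) (i : Fin n) :
    ((p.succAbove i) : ℕ) = if (i:ℕ) < (p:ℕ) then (i:ℕ) else (i:ℕ)+1 := by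
  rw [Fin.succAbove]
  split
  · rename_i h; rw [if_pos (show (i:ℕ) < (p:ℕ) from h)]; rfl
  · rename_i h; rw [if_neg (show ¬(i:ℕ) < (p:ℕ) by simpa [Fin.lt_def] using h)]; rfl

lemma det_e_col (f : ℕ → ℕ → ℂ) (k : ℕ) :
    ((Matrix.of fun i j : Fin (k+1) => f i j).updateCol (Fin.last k)
      (fun i => if i = Fin.last k then 1 else 0)).det
    = (Matrix.of fun i j : Fin k => f i j).det := by
  rw [Matrix.det_succ_column _ (Fin.last k)]
  rw [Finset.sum_eq_single (Fin.last k)]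
  · rw [Matrix.updateCol_apply, if_pos rfl, if_pos rfl]
    have hsign : ((-1:ℂ)) ^ ((Fin.last k : ℕ) + (Fin.last k : ℕ)) = 1 :=
      Even.neg_one_pow ⟨k, by simp⟩
    rw [hsign, one_mul, one_mul]
    congr 1
    ext i j
    rw [Fin.succAbove_last, Matrix.submatrix_apply, Matrix.updateCol_apply,
      if_neg (Fin.castSucc_lt_last j).ne]
    rfl
  · intro i _ hi
    rw [Matrix.updateCol_apply, if_pos rfl, if_neg hi, mul_zero, zero_mul]
  · intro h; exact absurd (Finset.mem_univ _) h

lemma L1 (k : ℕ) :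
    χf α lam (k+1) = lam * χf α lam k + starRingEnd ℂ (α k) * Gf α lam k := by
  have hcol : Mmat α lam (k+1) = (Mmat α lam (k+1)).updateCol (Fin.last k)
      ((lam • fun i : Fin (k+1) => if i = Fin.last k then (1:ℂ) else 0)
        + (starRingEnd ℂ (α k) • fun i : Fin (k+1) => uv α k i)) := by
    ext i j
    rw [Matrix.updateCol_apply]
    split
    · rename_i hj
      have hjv : (j : ℕ) = k := by rw [hj]; rfl
      simp only [Pi.add_apply, Pi.smul_apply, smul_eq_mul]
      by_cases hi : i = Fin.last k
      · have hiv : (i : ℕ) = k := by rw [hi]; rfl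
        rw [if_pos hi, mul_one]
        show Mfun α lam i j = _
        rw [hiv, hjv, Mfun_diag]
      · have hiv : (i : ℕ) < k := by
          have := i.isLt; rcases Nat.lt_succ_iff_lt_or_eq.mp this with h|h
          · exact h
          · exact absurd (Fin.ext h) (by simpa [Fin.last] using hi)
        rw [if_neg hi, mul_zero, zero_add]
        show Mfun α lam i j = _
        rw [hjv, Mfun_col α lam hiv]
    · rfl
  rw [χf]
  conv_lhs => rw [hcol]
  rw [Matrix.det_updateCol_add, Matrix.det_updateCol_smul,
    Matrix.det_updateCol_smul]
  rw [Mmat, det_e_col (fun i j => Mfun α lam i j) k]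
  rfl

lemma L2 (k : ℕ) :
    Tf α lam (k+1) = Tf α lam k + lam * α k * Ff α lam k := by
  have hcol : Nmat α lam (k+1) = (Nmat α lam (k+1)).updateCol (Fin.last k)
      ((fun i : Fin (k+1) => if i = Fin.last k then (1:ℂ) else 0)
        + ((lam * α k) • fun i : Fin (k+1) => starRingEnd ℂ (uv α k i))) := by
    ext i j
    rw [Matrix.updateCol_apply]
    split
    · rename_i hj
      have hjv : (j : ℕ) = k := by rw [hj]; rfl
      simp only [Pi.add_apply, Pi.smul_apply, smul_eq_mul]
      by_cases hi : i = Fin.last k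
      · have hiv : (i : ℕ) = k := by rw [hi]; rfl
        rw [if_pos hi]
        show Nfun α lam i j = _
        rw [hiv, hjv, Nfun_diag]
      · have hiv : (i : ℕ) < k := by
          have := i.isLt; rcases Nat.lt_succ_iff_lt_or_eq.mp this with h|h
          · exact h
          · exact absurd (Fin.ext h) (by simpa [Fin.last] using hi)
        rw [if_neg hi, zero_add]
        show Nfun α lam i j = _
        rw [hjv, Nfun_col α lam hiv]
    · rfl
  rw [Tf]
  conv_lhs => rw [hcol]
  rw [Matrix.det_updateCol_add, Matrix.det_updateCol_smul]
  rw [Nmat, det_e_col (fun i j => Nfun α lam i j) k]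
  rfl

lemma L3 (k : ℕ) :
    Gf α lam (k+1) = α k * χf α lam (k+1) + ρv α k ^ 2 * Gf α lam k := by
  set U := (Mmat α lam (k+2)).updateCol (Fin.last (k+1))
      (fun i => uv α (k+1) i) with hU
  have hent : ∀ (i j : Fin (k+2)),
      U i j = if (j:ℕ) = k+1 then uv α (k+1) i else Mfun α lam i j := by
    intro i j
    rw [hU, Matrix.updateCol_apply]
    by_cases h : j = Fin.last (k+1)
    · rw [if_pos h, if_pos (by rw [h]; rfl)]
    · rw [if_neg h, if_neg (fun hv => h (Fin.ext (by simpa using hv)))]; rfl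
  have hGf : Gf α lam (k+1) = U.det := rfl
  rw [hGf, Matrix.det_succ_row U (Fin.last (k+1)), Fin.sum_univ_castSucc,
    Fin.sum_univ_castSucc]
  have hzero : ∀ j : Fin k,
      (-1:ℂ) ^ ((Fin.last (k+1) : ℕ) + ((j.castSucc.castSucc : Fin (k+2)) : ℕ))
        * U (Fin.last (k+1)) j.castSucc.castSucc
        * (U.submatrix (Fin.last (k+1)).succAbove
            (j.castSucc.castSucc).succAbove).det = 0 := by
    intro j
    have : U (Fin.last (k+1)) j.castSucc.castSucc = 0 := by
      rw [hent, if_neg (show ¬((j.castSucc.castSucc : Fin (k+2)) : ℕ) = k+1 by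
        simp only [Fin.coe_castSucc]; omega)]
      exact Mfun_low α lam (by simp only [Fin.val_last, Fin.coe_castSucc]; omega)
    rw [this, mul_zero, zero_mul]
  rw [Finset.sum_eq_zero (fun j _ => hzero j), zero_add]
  -- middle term
  have hmid_entry : U (Fin.last (k+1)) ((Fin.last k).castSucc) = -ρv α k := by
    rw [hent, if_neg (by simp)]
    exact Mfun_sub α lam k
  have hmid_minor : (U.submatrix (Fin.last (k+1)).succAbove
      ((Fin.last k).castSucc).succAbove)
      = (Mmat α lam (k+1)).updateCol (Fin.last k)
          (fun i => ρv α k * uv α k i) := by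
    ext i j
    rw [Matrix.submatrix_apply, hent, Matrix.updateCol_apply]
    have hrow : (((Fin.last (k+1)).succAbove i : Fin (k+2)) : ℕ) = (i:ℕ) := by
      rw [val_succAbove, if_pos]; exact i.isLt
    have hcol : ((((Fin.last k).castSucc).succAbove j : Fin (k+2)) : ℕ)
        = if (j:ℕ) < k then (j:ℕ) else (j:ℕ)+1 := by
      rw [val_succAbove]; rfl
    by_cases hj : j = Fin.last k
    · have hjv : (j:ℕ) = k := by rw [hj]; rfl
      rw [if_pos hj, hcol, hjv, if_neg (lt_irrefl k), if_pos rfl, hrow]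
      exact uv_succ α (by omega : (i:ℕ) ≤ k)
    · have hjv : (j:ℕ) < k := by
        have := j.isLt; rcases Nat.lt_succ_iff_lt_or_eq.mp this with h|h
        · exact h
        · exact absurd (Fin.ext h) (by simpa [Fin.last] using hj)
      rw [if_neg hj, hcol, if_pos hjv, if_neg (by omega), hrow]
      rfl
  have hmid_det : ((Mmat α lam (k+1)).updateCol (Fin.last k)
      (fun i => ρv α k * uv α k i)).det = ρv α k * Gf α lam k := by
    have : (fun i : Fin (k+1) => ρv α k * uv α k i)
        = ρv α k • (fun i : Fin (k+1) => uv α k i) := by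
      ext i; simp
    rw [this, Matrix.det_updateCol_smul]; rfl
  have hmid_sign : (-1:ℂ) ^ ((Fin.last (k+1) : ℕ)
      + (((Fin.last k).castSucc : Fin (k+2)) : ℕ)) = -1 := by
    have : ((Fin.last (k+1) : ℕ) + (((Fin.last k).castSucc : Fin (k+2)) : ℕ))
        = 2*k+1 := by simp; ring
    rw [this]; exact Odd.neg_one_pow ⟨k, rfl⟩
  -- last term
  have hlast_entry : U (Fin.last (k+1)) (Fin.last (k+1)) = α k := by
    rw [hent, if_pos (show ((Fin.last (k+1)):ℕ) = k+1 from rfl)]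
    show uv α (k+1) (k+1) = α k
    rw [uv_self]; rfl
  have hlast_minor : (U.submatrix (Fin.last (k+1)).succAbove
      (Fin.last (k+1)).succAbove).det = χf α lam (k+1) := by
    rw [Fin.succAbove_last]
    have : U.submatrix Fin.castSucc Fin.castSucc = Mmat α lam (k+1) := by
      ext i j
      rw [Matrix.submatrix_apply, hent, if_neg (by simp; omega)]
      rfl
    rw [this]; rfl
  have hlast_sign : (-1:ℂ) ^ ((Fin.last (k+1) : ℕ) + ((Fin.last (k+1)) : ℕ))
      = 1 := Even.neg_one_pow ⟨k+1, by simp⟩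
  rw [hmid_entry, hmid_minor, hmid_det, hmid_sign, hlast_entry, hlast_minor,
    hlast_sign]
  ring

lemma L4 (k : ℕ) :
    Ff α lam (k+1) = starRingEnd ℂ (α k) * Tf α lam (k+1)
      + lam * ρv α k ^ 2 * Ff α lam k := by
  set U := (Nmat α lam (k+2)).updateCol (Fin.last (k+1))
      (fun i => starRingEnd ℂ (uv α (k+1) i)) with hU
  have hent : ∀ (i j : Fin (k+2)),
      U i j = if (j:ℕ) = k+1 then starRingEnd ℂ (uv α (k+1) i)
        else Nfun α lam i j := by
    intro i j
    rw [hU, Matrix.updateCol_apply]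
    by_cases h : j = Fin.last (k+1)
    · rw [if_pos h, if_pos (by rw [h]; rfl)]
    · rw [if_neg h, if_neg (fun hv => h (Fin.ext (by simpa using hv)))]; rfl
  have hGf : Ff α lam (k+1) = U.det := rfl
  rw [hGf, Matrix.det_succ_row U (Fin.last (k+1)), Fin.sum_univ_castSucc,
    Fin.sum_univ_castSucc]
  have hzero : ∀ j : Fin k,
      (-1:ℂ) ^ ((Fin.last (k+1) : ℕ) + ((j.castSucc.castSucc : Fin (k+2)) : ℕ))
        * U (Fin.last (k+1)) j.castSucc.castSucc
        * (U.submatrix (Fin.last (k+1)).succAbove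
            (j.castSucc.castSucc).succAbove).det = 0 := by
    intro j
    have : U (Fin.last (k+1)) j.castSucc.castSucc = 0 := by
      rw [hent, if_neg (show ¬((j.castSucc.castSucc : Fin (k+2)) : ℕ) = k+1 by
        simp only [Fin.coe_castSucc]; omega)]
      exact Nfun_low α lam (by simp only [Fin.val_last, Fin.coe_castSucc]; omega)
    rw [this, mul_zero, zero_mul]
  rw [Finset.sum_eq_zero (fun j _ => hzero j), zero_add]
  have hmid_entry : U (Fin.last (k+1)) ((Fin.last k).castSucc)
      = -(lam * ρv α k) := by
    rw [hent, if_neg (by simp)]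
    exact Nfun_sub α lam k
  have hmid_minor : (U.submatrix (Fin.last (k+1)).succAbove
      ((Fin.last k).castSucc).succAbove)
      = (Nmat α lam (k+1)).updateCol (Fin.last k)
          (fun i => ρv α k * starRingEnd ℂ (uv α k i)) := by
    ext i j
    rw [Matrix.submatrix_apply, hent, Matrix.updateCol_apply]
    have hrow : (((Fin.last (k+1)).succAbove i : Fin (k+2)) : ℕ) = (i:ℕ) := by
      rw [val_succAbove, if_pos]; exact i.isLt
    have hcol : ((((Fin.last k).castSucc).succAbove j : Fin (k+2)) : ℕ)
        = if (j:ℕ) < k then (j:ℕ) else (j:ℕ)+1 := by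
      rw [val_succAbove]; rfl
    by_cases hj : j = Fin.last k
    · have hjv : (j:ℕ) = k := by rw [hj]; rfl
      rw [if_pos hj, hcol, hjv, if_neg (lt_irrefl k), if_pos rfl, hrow]
      rw [uv_succ α (by omega : (i:ℕ) ≤ k), map_mul, conj_ρv]
    · have hjv : (j:ℕ) < k := by
        have := j.isLt; rcases Nat.lt_succ_iff_lt_or_eq.mp this with h|h
        · exact h
        · exact absurd (Fin.ext h) (by simpa [Fin.last] using hj)
      rw [if_neg hj, hcol, if_pos hjv, if_neg (by omega), hrow]
      rfl
  have hmid_det : ((Nmat α lam (k+1)).updateCol (Fin.last k)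
      (fun i => ρv α k * starRingEnd ℂ (uv α k i))).det
      = ρv α k * Ff α lam k := by
    have : (fun i : Fin (k+1) => ρv α k * starRingEnd ℂ (uv α k i))
        = ρv α k • (fun i : Fin (k+1) => starRingEnd ℂ (uv α k i)) := by
      ext i; simp
    rw [this, Matrix.det_updateCol_smul]; rfl
  have hmid_sign : (-1:ℂ) ^ ((Fin.last (k+1) : ℕ)
      + (((Fin.last k).castSucc : Fin (k+2)) : ℕ)) = -1 := by
    have : ((Fin.last (k+1) : ℕ) + (((Fin.last k).castSucc : Fin (k+2)) : ℕ))
        = 2*k+1 := by simp; ring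
    rw [this]; exact Odd.neg_one_pow ⟨k, rfl⟩
  have hlast_entry : U (Fin.last (k+1)) (Fin.last (k+1))
      = starRingEnd ℂ (α k) := by
    rw [hent, if_pos (show ((Fin.last (k+1)):ℕ) = k+1 from rfl)]
    show starRingEnd ℂ (uv α (k+1) (k+1)) = _
    rw [uv_self]; rfl
  have hlast_minor : (U.submatrix (Fin.last (k+1)).succAbove
      (Fin.last (k+1)).succAbove).det = Tf α lam (k+1) := by
    rw [Fin.succAbove_last]
    have : U.submatrix Fin.castSucc Fin.castSucc = Nmat α lam (k+1) := by
      ext i j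
      rw [Matrix.submatrix_apply, hent, if_neg (by simp; omega)]
      rfl
    rw [this]; rfl
  have hlast_sign : (-1:ℂ) ^ ((Fin.last (k+1) : ℕ) + ((Fin.last (k+1)) : ℕ))
      = 1 := Even.neg_one_pow ⟨k+1, by simp⟩
  rw [hmid_entry, hmid_minor, hmid_det, hmid_sign, hlast_entry, hlast_minor,
    hlast_sign]
  ring

lemma rho_sq {j : ℕ} (h : ‖α j‖ ≤ 1) :
    ρv α j ^ 2 = 1 - α j * starRingEnd ℂ (α j) := by
  rw [ρv]
  have h0 : (0:ℝ) ≤ 1 - ‖α j‖ ^ 2 := by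
    nlinarith [norm_nonneg (α j)]
  rw [← Complex.ofReal_pow, Real.sq_sqrt h0, Complex.mul_conj,
    Complex.normSq_eq_norm_sq]
  push_cast
  ring

lemma GF_ind (k : ℕ) (h : ∀ l, l < k → ‖α l‖ < 1) :
    Gf α lam k = - Tf α lam k ∧ Ff α lam k = - χf α lam k := by
  induction k with
  | zero =>
      have hG : Gf α lam 0 = -1 := by
        rw [Gf, Matrix.det_fin_one, Matrix.updateCol_apply,
          if_pos (show (0 : Fin 1) = Fin.last 0 from rfl)]
        simp [uv, Av]
      have hF : Ff α lam 0 = -1 := by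
        rw [Ff, Matrix.det_fin_one, Matrix.updateCol_apply,
          if_pos (show (0 : Fin 1) = Fin.last 0 from rfl)]
        simp [uv, Av]
      have hT : Tf α lam 0 = 1 := Matrix.det_fin_zero
      have hχ : χf α lam 0 = 1 := Matrix.det_fin_zero
      rw [hG, hF, hT, hχ]
      norm_num
  | succ k ih =>
      obtain ⟨hG, hF⟩ := ih (fun l hl => h l (by omega))
      have hρ := rho_sq α (le_of_lt (h k (Nat.lt_succ_self k)))
      constructor
      · rw [L3, L1, L2, hG, hF, hρ]; ring
      · rw [L4, L2, L1, hG, hF, hρ]; ring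

lemma tilde_eq_T (k : ℕ) (hlam : lam ≠ 0) :
    hessCharTilde α k lam = Tf α lam k := by
  rw [hessCharTilde, ← χf_eq_hessChar, χf, RingHom.map_det, Tf]
  have hcard : lam ^ k = lam ^ Fintype.card (Fin k) := by rw [Fintype.card_fin]
  rw [hcard, ← Matrix.det_smul]
  congr 1
  ext i j
  simp only [Matrix.smul_apply, RingHom.mapMatrix_apply, Matrix.map_apply, Nmat,
    Matrix.of_apply, Nfun, Mmat, Mfun, smul_eq_mul]
  rw [map_sub, apply_ite (starRingEnd ℂ), map_zero, map_inv₀, Complex.conj_conj,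
    mul_sub, mul_ite, mul_zero, mul_inv_cancel₀ hlam]

end SzegoAux

/-- The Szegő-type coupled recurrence for the characteristic polynomials of
the leading principal blocks of the unitary Hessenberg matrix
`H(α₀,…,α_{n-1})`:
`χ_k(λ) = λ χ_{k-1}(λ) - conj(α_{k-1}) χ̃_{k-1}(λ)` and
`χ̃_k(λ) = χ̃_{k-1}(λ) - λ α_{k-1} χ_{k-1}(λ)`, with `χ₀ = χ̃₀ = 1`. -/


theorem stmt_9 (n : ℕ) (α : ℕ → ℂ)
    (hα : ∀ j, j < n - 1 → ‖α j‖ < 1)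
    (hlast : ‖α (n - 1)‖ ≤ 1) :
    (∀ lam : ℂ, hessChar α 0 lam = 1 ∧ hessCharTilde α 0 lam = 1) ∧
    ∀ k, k < n → ∀ lam : ℂ, lam ≠ 0 →
      hessChar α (k + 1) lam
          = lam * hessChar α k lam
            - starRingEnd ℂ (α k) * hessCharTilde α k lam ∧
      hessCharTilde α (k + 1) lam
          = hessCharTilde α k lam - lam * α k * hessChar α k lam := by
  have hbase : ∀ lam : ℂ, hessChar α 0 lam = 1 := by
    intro lam
    rw [hessChar, Matrix.det_fin_zero]
  refine ⟨fun lam => ⟨hbase lam, ?_⟩, ?_⟩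
  · rw [hessCharTilde, hbase, pow_zero, map_one, mul_one]
  · intro k hk lam hlam
    have hsm : ∀ l, l < k → ‖α l‖ < 1 := fun l hl => hα l (by omega)
    obtain ⟨hG, hF⟩ := SzegoAux.GF_ind α lam k hsm
    constructor
    · rw [← SzegoAux.χf_eq_hessChar, ← SzegoAux.χf_eq_hessChar,
        SzegoAux.tilde_eq_T α lam k hlam, SzegoAux.L1, hG]
      ring
    · rw [SzegoAux.tilde_eq_T α lam (k+1) hlam, SzegoAux.tilde_eq_T α lam k hlam,
        ← SzegoAux.χf_eq_hessChar, SzegoAux.L2, hF]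
      ring
end

section
/- For a 2n×2n real orthogonal Hessenberg matrix of determinant +1 parametrized by real α₀,…,α_{2n-2} with |α_k| < 1 (and α_{2n-1} = -1), with eigenvalues e^{±iθ_j} (j = 1,…,n), one has ∏_{j=1}^n |1 - λ_j|² = 2 ∏_{k=0}^{2n-2} (1 - α_k) and ∏_{j=1}^n |1 + λ_j|² = 2 ∏_{k=0}^{2n-2} (1 + (-1)^k α_k), where λ_j = e^{iθ_j}. -/
open Finset Complex

/-- The real orthogonal upper Hessenberg matrix parametrized by real
Verblunsky coefficients `α`, with `α₋₁ = -1`, `ρ j = √(1-α j²)`. -/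
noncomputable def hessenbergO (n : ℕ) (α : ℕ → ℝ) : Matrix (Fin n) (Fin n) ℝ :=
  let A : ℕ → ℝ := fun i => if i = 0 then -1 else α (i - 1)
  let ρ : ℕ → ℝ := fun j => Real.sqrt (1 - α j ^ 2)
  Matrix.of fun i j =>
    if (i : ℕ) = (j : ℕ) then -A i * α i
    else if (j : ℕ) + 1 = (i : ℕ) then ρ j
    else if (i : ℕ) < (j : ℕ) then -A i * α j * ∏ l ∈ Ico (i : ℕ) (j : ℕ), ρ l
    else 0

/-- LU factorization computation of `det (z•1 - H)` for the Hessenberg matrix. -/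
lemma hessenbergO_det_lu (N : ℕ) (z : ℝ) (α c d : ℕ → ℝ)
    (hd : ∀ i, i < N → d i ≠ 0)
    (hdz : ∀ i, i < N → d i = z + α i * c i)
    (hc0 : c 0 = -1)
    (hcs : ∀ i, i + 1 < N → c (i + 1) * d i = α i * d i + c i * (1 - α i ^ 2))
    (hsq : ∀ i, i + 1 < N → α i ^ 2 ≤ 1) :
    (z • (1 : Matrix (Fin N) (Fin N) ℝ) - hessenbergO N α).det
      = ∏ i ∈ range N, d i := by
  have hρsq : ∀ i, i + 1 < N →
      Real.sqrt (1 - α i ^ 2) * Real.sqrt (1 - α i ^ 2) = 1 - α i ^ 2 := fun i hi =>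
    Real.mul_self_sqrt (by nlinarith [hsq i hi])
  set L : Matrix (Fin N) (Fin N) ℝ := Matrix.of fun i j =>
    if (i : ℕ) = (j : ℕ) then 1
    else if (j : ℕ) + 1 = (i : ℕ) then -Real.sqrt (1 - α j ^ 2) / d j else 0 with hLdef
  set U : Matrix (Fin N) (Fin N) ℝ := Matrix.of fun i j =>
    if (i : ℕ) = (j : ℕ) then d i
    else if (i : ℕ) < (j : ℕ) then
      c i * α j * ∏ l ∈ Ico (i : ℕ) (j : ℕ), Real.sqrt (1 - α l ^ 2)
    else 0 with hUdef
  have hMLU : z • (1 : Matrix (Fin N) (Fin N) ℝ) - hessenbergO N α = L * U := by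
    ext i j
    rw [Matrix.mul_apply]
    have hone : (1 : Matrix (Fin N) (Fin N) ℝ) i j = if (i : ℕ) = (j : ℕ) then 1 else 0 := by
      simp [Matrix.one_apply, Fin.ext_iff]
    rcases Nat.eq_zero_or_pos (i : ℕ) with h0 | h0
    · -- first row
      rw [Finset.sum_eq_single i ?_ (by simp)]
      swap
      · intro k _ hk
        have hk' : (i : ℕ) ≠ (k : ℕ) := fun h => hk (Fin.ext h.symm)
        have : L i k = 0 := by
          simp only [hLdef, Matrix.of_apply]
          rw [if_neg hk', if_neg (by omega)]
        rw [this, zero_mul]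
      have hLii : L i i = 1 := by simp [hLdef]
      rw [hLii, one_mul]
      simp only [Matrix.sub_apply, Matrix.smul_apply, hone, hessenbergO, Matrix.of_apply,
        hUdef, smul_eq_mul]
      rcases Nat.eq_zero_or_pos (j : ℕ) with hj0 | hj0
      · have hij : (i : ℕ) = (j : ℕ) := by omega
        rw [if_pos hij, if_pos hij, if_pos hij, if_pos h0, hdz (i : ℕ) i.isLt, h0, hc0]
        ring
      · have hij : (i : ℕ) ≠ (j : ℕ) := by omega
        rw [if_neg hij, if_neg hij, if_neg (by omega), if_pos (by omega), if_pos h0,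
          if_neg hij, if_pos (by omega), h0, hc0]
        ring
    · -- rows with i ≥ 1
      have hiN : (i : ℕ) - 1 + 1 < N := by have := i.isLt; omega
      set m : ℕ := (i : ℕ) - 1 with hmdef
      have hm1 : m + 1 = (i : ℕ) := by omega
      have hmN : m < N := by omega
      have hdm : d m ≠ 0 := hd m hmN
      set im : Fin N := ⟨m, hmN⟩ with himdef
      have hne : im ≠ i := by
        intro h
        have := congrArg Fin.val h
        simp [himdef] at this
        omega
      have hsum : ∑ k, L i k * U k j
          = ∑ k ∈ ({im, i} : Finset (Fin N)), L i k * U k j := by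
        refine (Finset.sum_subset (Finset.subset_univ _) ?_).symm
        intro k _ hk
        simp only [Finset.mem_insert, Finset.mem_singleton] at hk
        push_neg at hk
        have hk1 : (k : ℕ) ≠ m := fun h => hk.1 (Fin.ext (by simp [himdef, h]))
        have hk2 : (i : ℕ) ≠ (k : ℕ) := fun h => hk.2 (Fin.ext h.symm)
        have : L i k = 0 := by
          simp only [hLdef, Matrix.of_apply]
          rw [if_neg hk2, if_neg (by omega)]
        rw [this, zero_mul]
      rw [hsum, Finset.sum_pair hne]
      have hLim : L i im = -Real.sqrt (1 - α m ^ 2) / d m := by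
        simp only [hLdef, Matrix.of_apply, himdef]
        rw [if_neg (by omega), if_pos (by omega)]
      have hLii : L i i = 1 := by simp [hLdef]
      rw [hLim, hLii, one_mul]
      simp only [Matrix.sub_apply, Matrix.smul_apply, hone, hessenbergO, Matrix.of_apply,
        hUdef, smul_eq_mul, himdef]
      have hA : (if (i : ℕ) = 0 then (-1 : ℝ) else α ((i : ℕ) - 1)) = α m := by
        rw [if_neg (by omega)]
      rcases lt_trichotomy (j : ℕ) m with hj | hj | hj
      · -- j < m : everything zero
        rw [if_neg (by omega), if_neg (by omega), if_neg (by omega), if_neg (by omega),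
          if_neg (by omega), if_neg (by omega), if_neg (by omega), if_neg (by omega)]
        ring
      · -- j = m : subdiagonal
        rw [if_neg (by omega), if_neg (by omega), if_pos (by omega), if_pos hj.symm,
          if_neg (by omega), if_neg (by omega), hj]
        rw [div_mul_cancel₀ _ hdm]
        ring
      · -- j > m
        rcases eq_or_lt_of_le (Nat.succ_le_of_lt hj) with hj1 | hj1
        · -- j = i : diagonal
          have hij : (i : ℕ) = (j : ℕ) := by omega
          rw [if_pos hij, if_pos hij, hA, if_neg (by omega), if_pos hj, if_pos hij]
          have h1 := hcs m hiN
          have h2 := hρsq m hiN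
          have h3 := hdz (i : ℕ) i.isLt
          have h4 : Ico m (j : ℕ) = {m} := by
            rw [← hij, ← hm1, Nat.Ico_succ_singleton]
          rw [h4, Finset.prod_singleton, h3, ← hij, ← hm1]
          field_simp
          linear_combination (α (m + 1) * c m) * h2 - α (m + 1) * h1
        · -- j > i : upper part
          have hij : (i : ℕ) ≠ (j : ℕ) := by omega
          rw [if_neg hij, if_neg hij, if_neg (by omega), if_pos (by omega), hA,
            if_neg (by omega), if_pos hj, if_neg hij, if_pos (by omega)]
          have h1 := hcs m hiN
          have h2 := hρsq m hiN
          have h5 : ∏ l ∈ Ico m (j : ℕ), Real.sqrt (1 - α l ^ 2)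
              = Real.sqrt (1 - α m ^ 2) * ∏ l ∈ Ico (m + 1) (j : ℕ), Real.sqrt (1 - α l ^ 2) :=
            Finset.prod_eq_prod_Ico_succ_bot hj _
          rw [h5, ← hm1]
          field_simp
          linear_combination
            ((α (j : ℕ) * ∏ l ∈ Ico (m + 1) (j : ℕ), Real.sqrt (1 - α l ^ 2)) * c m) * h2
              - (α (j : ℕ) * ∏ l ∈ Ico (m + 1) (j : ℕ), Real.sqrt (1 - α l ^ 2)) * h1
  have hLt : L.BlockTriangular OrderDual.toDual := by
    intro a b hab
    have hab' : (a : ℕ) < (b : ℕ) := hab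
    simp only [hLdef, Matrix.of_apply]
    rw [if_neg (by omega), if_neg (by omega)]
  have hUt : U.BlockTriangular id := by
    intro a b hab
    have hab' : (b : ℕ) < (a : ℕ) := hab
    simp only [hUdef, Matrix.of_apply]
    rw [if_neg (by omega), if_neg (by omega)]
  rw [hMLU, Matrix.det_mul, Matrix.det_of_lowerTriangular L hLt,
    Matrix.det_of_upperTriangular hUt]
  have hLdiag : ∀ k : Fin N, L k k = 1 := fun k => by simp [hLdef]
  have hUdiag : ∀ k : Fin N, U k k = d k := fun k => by simp [hUdef]
  simp only [hLdiag, hUdiag, Finset.prod_const_one, one_mul]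
  exact Fin.prod_univ_eq_prod_range (fun k => d k) N

/-- For a `2n×2n` real orthogonal Hessenberg matrix of determinant `+1`
parametrized by real `α₀,…,α_{2n-2}` with `|α_k| < 1` (and `α_{2n-1} = -1`),
whose spectrum consists of the conjugate pairs `e^{±iθ_j}` (`j = 1,…,n`), one
has `∏_j |1-λ_j|² = 2 ∏_{k=0}^{2n-2} (1-α_k)` and
`∏_j |1+λ_j|² = 2 ∏_{k=0}^{2n-2} (1+(-1)^k α_k)`, where `λ_j = e^{iθ_j}`. -/
theorem stmt_10 (n : ℕ) (hn : 0 < n) (α : ℕ → ℝ)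
    (hα : ∀ k, k ≤ 2 * n - 2 → |α k| < 1)
    (hlast : α (2 * n - 1) = -1)
    (θ : Fin n → ℝ)
    (hspec : ∀ z : ℂ,
      (z • (1 : Matrix (Fin (2 * n)) (Fin (2 * n)) ℂ)
          - (hessenbergO (2 * n) α).map (Complex.ofReal)).det
        = ∏ j, ((z - Complex.exp (θ j * I)) * (z - Complex.exp (-θ j * I)))) :
    (∏ j, ‖1 - Complex.exp (θ j * I)‖ ^ 2
        = 2 * ∏ k ∈ range (2 * n - 1), (1 - α k)) ∧
    (∏ j, ‖1 + Complex.exp (θ j * I)‖ ^ 2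
        = 2 * ∏ k ∈ range (2 * n - 1), (1 + (-1) ^ k * α k)) := by
  have hsq : ∀ i, i + 1 < 2 * n → α i ^ 2 ≤ 1 := by
    intro i hi
    have h := hα i (by omega)
    nlinarith [abs_nonneg (α i), _root_.sq_abs (α i)]
  have h2n : 2 * n = (2 * n - 1) + 1 := by omega
  have hodd : ((-1 : ℝ)) ^ (2 * n - 1) = -1 := by
    have h1 : 2 * n - 1 = 2 * (n - 1) + 1 := by omega
    rw [h1, pow_succ, pow_mul]; norm_num
  -- determinant at z = 1
  have det1 : ((1 : ℝ) • (1 : Matrix (Fin (2 * n)) (Fin (2 * n)) ℝ)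
      - hessenbergO (2 * n) α).det = 2 * ∏ k ∈ range (2 * n - 1), (1 - α k) := by
    rw [hessenbergO_det_lu (2 * n) 1 α (fun _ => -1) (fun i => 1 - α i) ?_ ?_ rfl ?_ hsq]
    · rw [h2n, Finset.prod_range_succ, ← h2n, hlast]
      ring
    · intro i hi
      show (1 : ℝ) - α i ≠ 0
      rcases eq_or_lt_of_le (Nat.lt_succ_iff.mp (h2n ▸ hi)) with h | h
      · rw [h, hlast]; norm_num
      · have h' := (abs_lt.mp (hα i (by omega))).2
        intro hcon
        linarith
    · intro i _
      show (1 : ℝ) - α i = 1 + α i * (-1)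
      ring
    · intro i _
      show (-1 : ℝ) * (1 - α i) = α i * (1 - α i) + (-1) * (1 - α i ^ 2)
      ring
  -- determinant at z = -1
  have det2 : ((-1 : ℝ) • (1 : Matrix (Fin (2 * n)) (Fin (2 * n)) ℝ)
      - hessenbergO (2 * n) α).det
      = 2 * ∏ k ∈ range (2 * n - 1), (1 + (-1) ^ k * α k) := by
    rw [hessenbergO_det_lu (2 * n) (-1) α (fun i => (-1) ^ (i + 1))
      (fun i => -(1 + (-1) ^ i * α i)) ?_ ?_ (by norm_num) ?_ hsq]
    · have hfac : ∀ k ∈ range (2 * n), -(1 + (-1 : ℝ) ^ k * α k)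
          = (-1) * (1 + (-1) ^ k * α k) := fun k _ => by ring
      rw [Finset.prod_congr rfl hfac, Finset.prod_mul_distrib, Finset.prod_const,
        Finset.card_range]
      have hev : ((-1 : ℝ)) ^ (2 * n) = 1 := by simp [pow_mul]
      rw [hev, one_mul, h2n, Finset.prod_range_succ, ← h2n, hlast, hodd]
      ring
    · intro i hi
      show -(1 + (-1 : ℝ) ^ i * α i) ≠ 0
      rcases eq_or_lt_of_le (Nat.lt_succ_iff.mp (h2n ▸ hi)) with h | h
      · rw [h, hlast, hodd]; norm_num
      · have h' := abs_lt.mp (hα i (by omega))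
        rcases Nat.even_or_odd i with he | ho
        · rw [he.neg_one_pow]
          intro hcon
          have : (1 : ℝ) + α i = 0 := by linarith [neg_eq_zero.mp hcon]
          linarith [h'.1]
        · rw [ho.neg_one_pow]
          intro hcon
          have : (1 : ℝ) - α i = 0 := by
            have := neg_eq_zero.mp hcon
            linarith
          linarith [h'.2]
    · intro i _
      show -(1 + (-1 : ℝ) ^ i * α i) = -1 + α i * (-1) ^ (i + 1)
      rw [pow_succ]
      ring
    · intro i _
      show (-1 : ℝ) ^ (i + 1 + 1) * (-(1 + (-1) ^ i * α i))
          = α i * (-(1 + (-1) ^ i * α i)) + (-1) ^ (i + 1) * (1 - α i ^ 2)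
      have hs : ((-1 : ℝ)) ^ i * (-1) ^ i = 1 := by
        rw [← pow_add]
        exact Even.neg_one_pow ⟨i, by ring⟩
      simp only [pow_succ ((-1 : ℝ)) (i + 1), pow_succ ((-1 : ℝ)) i]
      linear_combination (-(α i)) * hs
  -- passing to ℂ
  have key : ∀ z : ℝ, ((z : ℂ) • (1 : Matrix (Fin (2 * n)) (Fin (2 * n)) ℂ)
      - (hessenbergO (2 * n) α).map Complex.ofReal).det
      = (((z • (1 : Matrix (Fin (2 * n)) (Fin (2 * n)) ℝ)
          - hessenbergO (2 * n) α).det : ℝ) : ℂ) := by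
    intro z
    have hmap : (z : ℂ) • (1 : Matrix (Fin (2 * n)) (Fin (2 * n)) ℂ)
        - (hessenbergO (2 * n) α).map Complex.ofReal
        = (z • (1 : Matrix (Fin (2 * n)) (Fin (2 * n)) ℝ)
            - hessenbergO (2 * n) α).map Complex.ofRealHom := by
      ext i j
      simp only [Matrix.map_apply, Matrix.sub_apply, Matrix.smul_apply, Matrix.one_apply,
        smul_eq_mul, Complex.ofRealHom_eq_coe]
      push_cast
      split_ifs <;> simp
    rw [hmap]
    exact (RingHom.map_det Complex.ofRealHom _).symm
  have hconj : ∀ t : ℝ, (starRingEnd ℂ) (Complex.exp (t * I)) = Complex.exp (-t * I) := by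
    intro t
    rw [← Complex.exp_conj, map_mul, Complex.conj_ofReal, Complex.conj_I]
    ring_nf
  have habs : ∀ w : ℂ, ((‖w‖ ^ 2 : ℝ) : ℂ) = w * (starRingEnd ℂ) w := by
    intro w
    rw [Complex.mul_conj, ← Complex.sq_norm]
  constructor
  · have e1 : ((∏ j, ‖1 - Complex.exp (θ j * I)‖ ^ 2 : ℝ) : ℂ)
        = ((2 * ∏ k ∈ range (2 * n - 1), (1 - α k) : ℝ) : ℂ) := by
      rw [Complex.ofReal_prod]
      have hterm : ∀ j : Fin n, ((‖1 - Complex.exp (θ j * I)‖ ^ 2 : ℝ) : ℂ)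
          = ((1 : ℂ) - Complex.exp (θ j * I)) * ((1 : ℂ) - Complex.exp (-θ j * I)) := by
        intro j
        rw [habs, map_sub, map_one, hconj]
      rw [Finset.prod_congr rfl (fun j _ => hterm j), ← hspec 1,
        show ((1 : ℂ)) = ((1 : ℝ) : ℂ) from by norm_num, key 1, det1]
    exact_mod_cast e1
  · have e2 : ((∏ j, ‖1 + Complex.exp (θ j * I)‖ ^ 2 : ℝ) : ℂ)
        = ((2 * ∏ k ∈ range (2 * n - 1), (1 + (-1) ^ k * α k) : ℝ) : ℂ) := by
      rw [Complex.ofReal_prod]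
      have hterm : ∀ j : Fin n, ((‖1 + Complex.exp (θ j * I)‖ ^ 2 : ℝ) : ℂ)
          = (((-1) : ℂ) - Complex.exp (θ j * I)) * (((-1) : ℂ) - Complex.exp (-θ j * I)) := by
        intro j
        rw [habs, map_add, map_one, hconj]
        ring
      rw [Finset.prod_congr rfl (fun j _ => hterm j), ← hspec (-1),
        show ((-1 : ℂ)) = ((-1 : ℝ) : ℂ) from by norm_num, key (-1), det2]
    exact_mod_cast e2
end

section
/- Let U be an n×n unitary matrix with distinct eigenvalues e^{iθ_1},…,e^{iθ_n} and unitary eigenvector matrix V = [v_{jk}]. For t on the unit circle, the eigenvalues of Ũ = (I_n - (1-t)e₁e₁ᵀ)U are exactly the zeros of the rational function C_n(λ) = 1 + (t-1) ∑_{j=1}^n e^{iθ_j}|v_{1j}|²/(e^{iθ_j} - λ). -/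
open Finset Complex
open scoped Matrix

/-- Let `U` be an `n×n` unitary matrix with distinct eigenvalues `e^{iθ_j}`
and unitary eigenvector matrix `V` (so `U V = V diag(e^{iθ_j})`, columns of
`V` being the normalized eigenvectors).  For `t` on the unit circle, a
complex number `λ` not equal to any `e^{iθ_j}` is an eigenvalue of the
perturbed matrix `Ũ = (I - (1-t) e₁e₁ᵀ) U` (i.e. `U` with first row
multiplied by `t`) iff
`C_n(λ) = 1 + (t-1) ∑_j e^{iθ_j} |v_{1j}|² / (e^{iθ_j} - λ) = 0`. -/
theorem stmt_11 (n : ℕ) (hn : 0 < n)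
    (U V : Matrix (Fin n) (Fin n) ℂ)
    (hU : U ∈ Matrix.unitaryGroup (Fin n) ℂ)
    (hV : V ∈ Matrix.unitaryGroup (Fin n) ℂ)
    (θ : Fin n → ℝ)
    (hdist : Function.Injective fun j => Complex.exp (θ j * I))
    (heig : U * V = V * Matrix.diagonal fun j => Complex.exp (θ j * I))
    (t : ℂ) (ht : ‖t‖ = 1) :
    ∀ lam : ℂ, (∀ j, lam ≠ Complex.exp (θ j * I)) →
      (((Matrix.of fun i j : Fin n =>
          if i = ⟨0, hn⟩ then t * U i j else U i j)
            - lam • (1 : Matrix (Fin n) (Fin n) ℂ)).det = 0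
        ↔ 1 + (t - 1) * ∑ j, Complex.exp (θ j * I) *
            ((‖V ⟨0, hn⟩ j‖ : ℝ) : ℂ) ^ 2 /
              (Complex.exp (θ j * I) - lam) = 0) := by
  intro lam hlam
  set i0 : Fin n := ⟨0, hn⟩
  set ω : Fin n → ℂ := fun j => Complex.exp (θ j * I) with hω
  -- unitarity facts
  have hVV' : V * Vᴴ = 1 := by
    have := (Matrix.mem_unitaryGroup_iff).mp hV
    simpa [Matrix.star_eq_conjTranspose] using this
  have hU' : U = V * Matrix.diagonal ω * Vᴴ := by
    calc U = U * (V * Vᴴ) := by rw [hVV', Matrix.mul_one]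
    _ = (U * V) * Vᴴ := by rw [Matrix.mul_assoc]
    _ = V * Matrix.diagonal ω * Vᴴ := by rw [heig]
  have hne : ∀ j, ω j - lam ≠ 0 := fun j => sub_ne_zero.mpr (Ne.symm (hlam j))
  -- the pieces
  set D : Matrix (Fin n) (Fin n) ℂ := Matrix.diagonal (fun j => ω j - lam) with hD
  set u' : Fin n → ℂ := fun j => (t - 1) * (starRingEnd ℂ) (V i0 j) with hu'
  set w : Fin n → ℂ := fun j => (t - 1) * (starRingEnd ℂ) (V i0 j) / (ω j - lam) with hw
  set z : Fin n → ℂ := fun j => ω j * V i0 j with hz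
  set c : Fin n → ℂ := fun i => (t - 1) * (1 : Matrix (Fin n) (Fin n) ℂ) i i0 with hc
  have h1 : V * D * Vᴴ = U - lam • (1 : Matrix (Fin n) (Fin n) ℂ) := by
    have hD2 : D = Matrix.diagonal ω - lam • (1 : Matrix (Fin n) (Fin n) ℂ) := by
      rw [hD, Matrix.smul_one_eq_diagonal, ← Matrix.diagonal_sub]
    rw [hD2, Matrix.mul_sub, Matrix.sub_mul, Matrix.mul_smul, Matrix.mul_one,
      Matrix.smul_mul, hVV', hU']
  have h2 : V * Matrix.replicateCol Unit u' = Matrix.replicateCol Unit c := by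
    ext i u
    have : (1 : Matrix (Fin n) (Fin n) ℂ) i i0 = (V * Vᴴ) i i0 := by rw [hVV']
    simp only [Matrix.mul_apply, Matrix.replicateCol_apply, hc, this,
      Matrix.conjTranspose_apply, Finset.mul_sum]
    exact Finset.sum_congr rfl fun j _ => by simp [hu']; ring
  have h3 : Matrix.replicateRow Unit z * Vᴴ = Matrix.replicateRow Unit (U i0) := by
    ext u k
    simp only [Matrix.mul_apply, Matrix.replicateRow_apply, hU', Matrix.mul_diagonal]
    exact Finset.sum_congr rfl fun j _ => by
      simp only [hz, Matrix.diagonal_apply, mul_ite, mul_zero, Finset.sum_ite_eq',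
        Finset.mem_univ, if_true]
      ring
  have h4 : Matrix.replicateCol Unit c * Matrix.replicateRow Unit (U i0)
      = (Matrix.of fun i j : Fin n => if i = i0 then t * U i j else U i j) - U := by
    ext i j
    simp only [Matrix.mul_apply, Matrix.replicateCol_apply, Matrix.replicateRow_apply, Matrix.of_apply,
      Matrix.sub_apply, Finset.univ_unique, Finset.sum_singleton, hc, Matrix.one_apply]
    by_cases h : i = i0 <;> simp [h] <;> ring
  have key : (Matrix.of fun i j : Fin n => if i = i0 then t * U i j else U i j)
        - lam • (1 : Matrix (Fin n) (Fin n) ℂ)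
      = V * (D + Matrix.replicateCol Unit u' * Matrix.replicateRow Unit z) * Vᴴ := by
    rw [Matrix.mul_add, Matrix.add_mul, h1, ← Matrix.mul_assoc,
      Matrix.mul_assoc (V * Matrix.replicateCol Unit u'), h2, h3, h4]
    abel
  have hfac : D + Matrix.replicateCol Unit u' * Matrix.replicateRow Unit z
      = D * (1 + Matrix.replicateCol Unit w * Matrix.replicateRow Unit z) := by
    rw [Matrix.mul_add, Matrix.mul_one, ← Matrix.mul_assoc]
    congr 1
    have : D * Matrix.replicateCol Unit w = Matrix.replicateCol Unit u' := by
      ext i u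
      simp only [hD, Matrix.diagonal_mul, Matrix.replicateCol_apply, hw, hu']
      rw [mul_comm, div_mul_cancel₀ _ (hne i)]
    rw [this]
  have hdet1 : V.det * Vᴴ.det = 1 := by
    have := congrArg Matrix.det hVV'
    rwa [Matrix.det_mul, Matrix.det_one] at this
  have hdet : ((Matrix.of fun i j : Fin n => if i = i0 then t * U i j else U i j)
        - lam • (1 : Matrix (Fin n) (Fin n) ℂ)).det
      = (∏ j, (ω j - lam)) * (1 + z ⬝ᵥ w) := by
    rw [key, hfac, Matrix.det_mul, Matrix.det_mul, Matrix.det_mul,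
      Matrix.det_one_add_replicateCol_mul_replicateRow, hD, Matrix.det_diagonal]
    calc V.det * ((∏ j, (ω j - lam)) * (1 + z ⬝ᵥ w)) * Vᴴ.det
        = (V.det * Vᴴ.det) * ((∏ j, (ω j - lam)) * (1 + z ⬝ᵥ w)) := by ring
      _ = (∏ j, (ω j - lam)) * (1 + z ⬝ᵥ w) := by rw [hdet1, one_mul]
  have hprod : (∏ j, (ω j - lam)) ≠ 0 := Finset.prod_ne_zero_iff.mpr fun j _ => hne j
  have hsum : z ⬝ᵥ w = (t - 1) * ∑ j, ω j * ((‖V i0 j‖ : ℝ) : ℂ) ^ 2 / (ω j - lam) := by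
    rw [dotProduct, Finset.mul_sum]
    refine Finset.sum_congr rfl fun j _ => ?_
    have habs : ((‖V i0 j‖ : ℝ) : ℂ) ^ 2 = V i0 j * (starRingEnd ℂ) (V i0 j) := by
      calc ((‖V i0 j‖ : ℝ) : ℂ) ^ 2 = ((‖V i0 j‖ ^ 2 : ℝ) : ℂ) := by
            push_cast; ring
        _ = ((Complex.normSq (V i0 j) : ℝ) : ℂ) := by rw [Complex.sq_norm]
        _ = V i0 j * (starRingEnd ℂ) (V i0 j) := (Complex.mul_conj (V i0 j)).symm
    rw [habs, hz, hw]
    ring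
  rw [hdet, hsum, mul_eq_zero]
  simp [hprod]
  exact Iff.rfl
end
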